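/- arXiv:1310.5156 — 2 statements merged into one kernel-verified Lean document; each statement's English description precedes it below -/
import Mathlib

section
/- Convergence rate of the projected recursive Newton method with noisy data (Theorem 2.2, explicit form): let X and Y be real Hilbert spaces, N ≥ 1 and J ≥ 1 integers, Δk > 0 and k_n := k_l + nΔk for n = 0,…,N. Let X₀ ⊆ X₁ ⊆ … ⊆ X_N be closed subspaces of X with orthogonal projections P_n. Let F : X × ℝ → Y be twice continuously Fréchet differentiable with ‖∂_rF(r,k)‖ ≤ d₁, ‖∂_kF(r,k)‖ ≤ d₂, ‖∂²_{rr}F(r,k)‖ ≤ d₃ and ‖∂²_{kr}F(r,k)‖ ≤ d₄ for all (r,k). Suppose r̃₀, …, r̃_N ∈ X satisfy r̃_n ∈ X_n, F(r̃_n, k_n) = 0, and ‖r̃_{n+1} − r̃_n‖ ≤ d₀Δk for a constant d₀ ≥ 1, and suppose σ > 0 satisfies ‖∂_rF(r̃_n, k_n)x‖ ≥ σ‖x‖ for all x ∈ X and all n. Let f₁, …, f_N ∈ Y be noise vectors with ‖f_n‖ ≤ δ̃ for all n. Fix ε with 0 < ε < 3/(2 + d₀), ξ with 0 < ξ < 1,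 and α > 0 with α ≤ εσ²/(3 − ε); set c₀ := 4ε/(3 d₃ (9 d₁ + √α)), q := ε(1 + d₀)/3 and b := ε(2 + d₀)/3, and assume (9d₁d₄/(4α))Δk ≤ ε/3, Δk(d₀ + d₂/(2√α)) ≤ (1 − ξ)(1 − b)d₀c₀α, and δ̃/(2√α) ≤ ξ(1 − b)d₀c₀α. Define the iterates by r⁰_{n+1} := r_n, r^{j+1}_{n+1} := r^j_{n+1} − P_{n+1} R_α(∂_rF(r^j_{n+1}, k_{n+1})) (F(r^j_{n+1}, k_{n+1}) + f_{n+1}) for j = 0,…,J−1, and r_{n+1} := r^J_{n+1}, starting from a given r₀ ∈ X₀. If ‖r̃₀ − r₀‖ ≤ d₀c₀α, then ‖r̃_n − r_n‖ ≤ d₀c₀α for every n = 0,…,N, and the final error satisfies ‖r̃_N − r_N‖ ≤ [δ̃/(2√α(1 − q)) + q^{J−1} Δk (d₀ + d₂/(2√α))] / (1 − q^{J−1}b) + (q^{J−1}b)^N · d₀c₀α. -/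
open ContinuousLinearMap

section Aux
variable {X Y : Type*}
    [NormedAddCommGroup X] [InnerProductSpace ℝ X] [CompleteSpace X]
    [NormedAddCommGroup Y] [InnerProductSpace ℝ Y] [CompleteSpace Y]

lemma aux_proj_id (S : Submodule ℝ X) (P : X →L[ℝ] X)
    (hP : ∀ x : X, P x ∈ S ∧ x - P x ∈ Sᗮ) {z : X} (hz : z ∈ S) : P z = z := by
  have h1 : z - P z ∈ S := S.sub_mem hz (hP z).1
  have h2 : z - P z ∈ Sᗮ := (hP z).2
  have h3 : (inner ℝ (z - P z) (z - P z) : ℝ) = 0 :=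
    (Submodule.mem_orthogonal S _).1 h2 _ h1
  have h4 : z - P z = 0 := (inner_self_eq_zero (𝕜 := ℝ)).1 h3
  have h5 := sub_eq_zero.1 h4
  exact h5.symm

lemma aux_proj_norm (S : Submodule ℝ X) (P : X →L[ℝ] X)
    (hP : ∀ x : X, P x ∈ S ∧ x - P x ∈ Sᗮ) (z : X) : ‖P z‖ ≤ ‖z‖ := by
  have h3 : (inner ℝ (P z) (z - P z) : ℝ) = 0 :=
    (Submodule.mem_orthogonal S _).1 (hP z).2 _ (hP z).1
  have h4 : ‖z‖ ^ 2 = ‖P z‖ ^ 2 + 2 * (inner ℝ (P z) (z - P z) : ℝ) + ‖z - P z‖ ^ 2 := by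
    have := norm_add_sq_real (P z) (z - P z)
    simpa using this
  nlinarith [norm_nonneg (P z), norm_nonneg z, sq_nonneg (‖z - P z‖)]

lemma aux_RA_bound {α : ℝ} (hα : 0 < α) (A : X →L[ℝ] Y) (B : X →L[ℝ] X)
    (hB2 : (α • (1 : X →L[ℝ] X) + adjoint A ∘L A) ∘L B = 1)
    (y : Y) : ‖B (adjoint A y)‖ ≤ ‖y‖ / (2 * Real.sqrt α) := by
  set w := B (adjoint A y) with hw
  have hid : α • w + adjoint A (A w) = adjoint A y := by
    have := congrArg (fun T : X →L[ℝ] X => T (adjoint A y)) hB2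
    simpa [comp_apply, add_apply, smul_apply, one_apply] using this
  have h1 : α * ‖w‖ ^ 2 + ‖A w‖ ^ 2 = (inner ℝ y (A w) : ℝ) := by
    have h2 : (inner ℝ (α • w + adjoint A (A w)) w : ℝ) = inner ℝ (adjoint A y) w := by
      rw [hid]
    rw [inner_add_left, real_inner_smul_left, adjoint_inner_left, adjoint_inner_left,
      real_inner_self_eq_norm_sq, real_inner_self_eq_norm_sq] at h2
    exact h2
  have h3 : (inner ℝ y (A w) : ℝ) ≤ ‖y‖ * ‖A w‖ := real_inner_le_norm _ _
  have hs0 : 0 < Real.sqrt α := Real.sqrt_pos.2 hα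
  have hs2 : Real.sqrt α ^ 2 = α := Real.sq_sqrt hα.le
  rw [le_div_iff₀ (by positivity)]
  nlinarith [sq_nonneg (‖A w‖ - ‖y‖ / 2), norm_nonneg w, norm_nonneg (A w), norm_nonneg y,
    sq_nonneg (Real.sqrt α * ‖w‖ - ‖y‖ / 2), sq_nonneg (Real.sqrt α * ‖w‖ + ‖y‖ / 2)]

lemma aux_aB_bound {α σ ε Δ : ℝ} (hα : 0 < α) (hσ : 0 < σ) (hε : 0 < ε) (hε1 : ε ≤ 1)
    (hεα : 3 * α ≤ ε * (α + σ ^ 2)) (hΔ0 : 0 ≤ Δ) (hΔσ : 4 * Δ ≤ σ)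
    (A Ahat : X →L[ℝ] Y) (B : X →L[ℝ] X)
    (hB2 : (α • (1 : X →L[ℝ] X) + adjoint A ∘L A) ∘L B = 1)
    (hlow : ∀ x : X, σ * ‖x‖ ≤ ‖Ahat x‖) (hΔ : ‖Ahat - A‖ ≤ Δ) (v : X) :
    α * ‖B v‖ ≤ (ε / 3 + 2 * Δ / σ) * ‖v‖ := by
  set w := B v with hw
  have hid : α • w + adjoint A (A w) = v := by
    have := congrArg (fun T : X →L[ℝ] X => T v) hB2
    simpa [comp_apply, add_apply, smul_apply, one_apply] using this
  have h1 : α * ‖w‖ ^ 2 + ‖A w‖ ^ 2 = (inner ℝ v w : ℝ) := by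
    have h2 : (inner ℝ (α • w + adjoint A (A w)) w : ℝ) = inner ℝ v w := by rw [hid]
    rw [inner_add_left, real_inner_smul_left, adjoint_inner_left,
      real_inner_self_eq_norm_sq, real_inner_self_eq_norm_sq] at h2
    exact h2
  have hcoef : 0 ≤ ε / 3 + 2 * Δ / σ := by positivity
  rcases eq_or_lt_of_le (norm_nonneg w) with h0 | h0
  · rw [← h0]
    exact mul_nonneg hcoef (norm_nonneg v) |>.trans_eq' (by ring)
  have hAw : (σ - Δ) * ‖w‖ ≤ ‖A w‖ := by
    have t1 : σ * ‖w‖ ≤ ‖Ahat w‖ := hlow w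
    have t2 : ‖Ahat w‖ ≤ ‖A w‖ + ‖(Ahat - A) w‖ := by
      have : Ahat w = A w + (Ahat - A) w := by simp
      rw [this]; exact norm_add_le _ _
    have t3 : ‖(Ahat - A) w‖ ≤ Δ * ‖w‖ := by
      calc ‖(Ahat - A) w‖ ≤ ‖Ahat - A‖ * ‖w‖ := (Ahat - A).le_opNorm w
        _ ≤ Δ * ‖w‖ := mul_le_mul_of_nonneg_right hΔ (norm_nonneg w)
    nlinarith [norm_nonneg w]
  have hσΔ : 0 ≤ σ - Δ := by linarith
  have h5 : (α + (σ - Δ) ^ 2) * ‖w‖ ≤ ‖v‖ := by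
    have hiv : (inner ℝ v w : ℝ) ≤ ‖v‖ * ‖w‖ := real_inner_le_norm _ _
    have hsq : ((σ - Δ) * ‖w‖) ^ 2 ≤ ‖A w‖ ^ 2 := by
      apply sq_le_sq' _ hAw
      nlinarith [norm_nonneg (A w), mul_nonneg hσΔ (norm_nonneg w)]
    have h6 : ((α + (σ - Δ) ^ 2) * ‖w‖) * ‖w‖ ≤ ‖v‖ * ‖w‖ := by nlinarith
    exact le_of_mul_le_mul_right h6 h0
  have h6 : 3 * σ * α ≤ (ε * σ + 6 * Δ) * (α + (σ - Δ) ^ 2) := by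
    nlinarith [mul_le_mul_of_nonneg_left hεα hσ.le, mul_nonneg hΔ0 (sq_nonneg (σ - Δ)),
      sq_nonneg (σ - 4 * Δ), mul_pos hσ hα, mul_nonneg (mul_nonneg hΔ0 hΔ0) hσ.le,
      mul_nonneg (mul_nonneg (sub_nonneg.2 hε1) (mul_nonneg hσ.le hΔ0)) hσΔ,
      mul_nonneg (mul_nonneg (sub_nonneg.2 hε1) (mul_nonneg hσ.le hΔ0)) hΔ0]
  have hscalar : α ≤ (ε / 3 + 2 * Δ / σ) * (α + (σ - Δ) ^ 2) := by
    have heq : ε / 3 + 2 * Δ / σ = (ε * σ + 6 * Δ) / (3 * σ) := by field_simp; ring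
    rw [heq, div_mul_eq_mul_div, le_div_iff₀ (by positivity)]
    linarith
  calc α * ‖w‖ ≤ (ε / 3 + 2 * Δ / σ) * ((α + (σ - Δ) ^ 2) * ‖w‖) := by
        rw [← mul_assoc]
        exact mul_le_mul_of_nonneg_right (by nlinarith [sq_nonneg (σ - Δ)]) (norm_nonneg w)
    _ ≤ (ε / 3 + 2 * Δ / σ) * ‖v‖ := mul_le_mul_of_nonneg_left h5 hcoef

end Aux

open ContinuousLinearMap

section Aux2
variable {X Y : Type*}
    [NormedAddCommGroup X] [InnerProductSpace ℝ X] [CompleteSpace X]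
    [NormedAddCommGroup Y] [InnerProductSpace ℝ Y] [CompleteSpace Y]

lemma aux_exists_partial (F : X × ℝ → Y) (hF : ContDiff ℝ 2 F) :
    ∃ H : X × ℝ → (X →L[ℝ] Y), ContDiff ℝ 1 H ∧
      ∀ p : X × ℝ, fderiv ℝ (fun r => F (r, p.2)) p.1 = H p := by
  classical
  refine ⟨fun p => ((ContinuousLinearMap.compL ℝ X (X × ℝ) Y).flip
      (ContinuousLinearMap.inl ℝ X ℝ)) (fderiv ℝ F p), ?_, ?_⟩
  · exact (((ContinuousLinearMap.compL ℝ X (X × ℝ) Y).flip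
      (ContinuousLinearMap.inl ℝ X ℝ)).contDiff).comp
      (hF.fderiv_right (by norm_num))
  · intro p
    have h1 : HasFDerivAt (fun r : X => (r, p.2)) (ContinuousLinearMap.inl ℝ X ℝ) p.1 := by
      have h : HasFDerivAt (fun r : X => (r, p.2))
          ((ContinuousLinearMap.id ℝ X).prod (0 : X →L[ℝ] ℝ)) p.1 :=
        (hasFDerivAt_id p.1).prodMk (hasFDerivAt_const p.2 p.1)
      exact h
    have h2 : HasFDerivAt F (fderiv ℝ F (p.1, p.2)) (p.1, p.2) :=
      (hF.differentiable (by norm_num) (p.1, p.2)).hasFDerivAt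
    have h3 := h2.comp p.1 h1
    have h4 := h3.fderiv
    simpa [Function.comp_def] using h4

lemma aux_lip_r (F : X × ℝ → Y) (hF : ContDiff ℝ 2 F) {d₃ : ℝ}
    (hFrr : ∀ (r : X) (κ : ℝ),
      ‖fderiv ℝ (fun r' => fderiv ℝ (fun r'' => F (r'', κ)) r') r‖ ≤ d₃)
    (κ : ℝ) (x y : X) :
    ‖fderiv ℝ (fun r => F (r, κ)) y - fderiv ℝ (fun r => F (r, κ)) x‖ ≤ d₃ * ‖y - x‖ := by
  obtain ⟨H, hH, hHeq⟩ := aux_exists_partial F hF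
  have hfun : (fun r' : X => fderiv ℝ (fun r'' => F (r'', κ)) r') = fun r' => H (r', κ) :=
    funext fun z => hHeq (z, κ)
  have hdiff : ∀ z : X, DifferentiableAt ℝ (fun r' : X => fderiv ℝ (fun r'' => F (r'', κ)) r') z := by
    intro z
    rw [hfun]
    exact ((hH.differentiable (by norm_num)).comp
      ((differentiable_id.prodMk (differentiable_const κ)))) z
  exact Convex.norm_image_sub_le_of_norm_fderiv_le (fun z _ => hdiff z)
    (fun z _ => hFrr z κ) convex_univ (Set.mem_univ x) (Set.mem_univ y)

lemma aux_lip_k (F : X × ℝ → Y) (hF : ContDiff ℝ 2 F) {d₄ : ℝ}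
    (hFkr : ∀ (r : X) (κ : ℝ),
      ‖deriv (fun κ' => fderiv ℝ (fun r' => F (r', κ')) r) κ‖ ≤ d₄)
    (r : X) (κ κ' : ℝ) :
    ‖fderiv ℝ (fun r' => F (r', κ')) r - fderiv ℝ (fun r' => F (r', κ)) r‖ ≤ d₄ * |κ' - κ| := by
  obtain ⟨H, hH, hHeq⟩ := aux_exists_partial F hF
  have hfun : (fun t : ℝ => fderiv ℝ (fun r' => F (r', t)) r) = fun t => H (r, t) :=
    funext fun t => hHeq (r, t)
  have hdiff : ∀ t : ℝ, DifferentiableAt ℝ (fun t : ℝ => fderiv ℝ (fun r' => F (r', t)) r) t := by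
    intro t
    rw [hfun]
    exact ((hH.differentiable (by norm_num)).comp
      ((differentiable_const r).prodMk differentiable_id)) t
  have := Convex.norm_image_sub_le_of_norm_deriv_le (f := fun t : ℝ => fderiv ℝ (fun r' => F (r', t)) r)
    (fun z _ => hdiff z) (fun z _ => hFkr r z) convex_univ (Set.mem_univ κ) (Set.mem_univ κ')
  simpa [Real.norm_eq_abs] using this

lemma aux_taylor (F : X × ℝ → Y) (hF : ContDiff ℝ 2 F) {d₃ : ℝ} (hd₃ : 0 ≤ d₃)
    (hFrr : ∀ (r : X) (κ : ℝ),
      ‖fderiv ℝ (fun r' => fderiv ℝ (fun r'' => F (r'', κ)) r') r‖ ≤ d₃)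
    (κ : ℝ) (x y : X) :
    ‖F (y, κ) - F (x, κ) - (fderiv ℝ (fun r => F (r, κ)) x) (y - x)‖ ≤ d₃ * ‖y - x‖ ^ 2 := by
  set A := fderiv ℝ (fun r => F (r, κ)) x with hA
  have hFκ : Differentiable ℝ (fun z : X => F (z, κ)) :=
    (hF.comp (contDiff_id.prodMk contDiff_const)).differentiable (by norm_num)
  set g : X → Y := fun z => F (z, κ) - A z with hg
  have hgdiff : ∀ z : X, DifferentiableAt ℝ g z := fun z => (hFκ z).sub (A.differentiableAt)
  have hgderiv : ∀ z : X, fderiv ℝ g z = fderiv ℝ (fun r => F (r, κ)) z - A := by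
    intro z
    rw [hg]
    rw [fderiv_fun_sub (hFκ z) A.differentiableAt, A.fderiv]
  have hball : ∀ z ∈ Metric.closedBall x ‖y - x‖, ‖fderiv ℝ g z‖ ≤ d₃ * ‖y - x‖ := by
    intro z hz
    rw [hgderiv z]
    calc ‖fderiv ℝ (fun r => F (r, κ)) z - A‖ ≤ d₃ * ‖z - x‖ := aux_lip_r F hF hFrr κ x z
      _ ≤ d₃ * ‖y - x‖ := by
          apply mul_le_mul_of_nonneg_left _ hd₃
          simpa [dist_eq_norm] using hz
  have hmain := Convex.norm_image_sub_le_of_norm_fderiv_le (f := g) (x := x) (y := y)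
    (fun z _ => hgdiff z) hball (convex_closedBall x ‖y - x‖)
    (Metric.mem_closedBall_self (norm_nonneg _))
    (by simp [Metric.mem_closedBall, dist_eq_norm])
  have hgyx : g y - g x = F (y, κ) - F (x, κ) - A (y - x) := by
    simp only [hg, map_sub]
    abel
  rw [hgyx] at hmain
  calc ‖F (y, κ) - F (x, κ) - A (y - x)‖ ≤ d₃ * ‖y - x‖ * ‖y - x‖ := hmain
    _ = d₃ * ‖y - x‖ ^ 2 := by ring

end Aux2

section Step
variable {X Y : Type*}
    [NormedAddCommGroup X] [InnerProductSpace ℝ X] [CompleteSpace X]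
    [NormedAddCommGroup Y] [InnerProductSpace ℝ Y] [CompleteSpace Y]

lemma aux_newton_step {α σ ε Δ d₃ δt : ℝ} (hα : 0 < α) (hσ : 0 < σ) (hε : 0 < ε) (hε1 : ε ≤ 1)
    (hεα : 3 * α ≤ ε * (α + σ ^ 2)) (hΔ0 : 0 ≤ Δ) (hΔσ : 4 * Δ ≤ σ) (hd₃ : 0 ≤ d₃)
    (hδt : 0 ≤ δt)
    (S : Submodule ℝ X) (P : X →L[ℝ] X) (hP : ∀ x : X, P x ∈ S ∧ x - P x ∈ Sᗮ)
    (A Ahat : X →L[ℝ] Y) (B : X →L[ℝ] X)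
    (hB1 : B ∘L (α • (1 : X →L[ℝ] X) + adjoint A ∘L A) = 1)
    (hB2 : (α • (1 : X →L[ℝ] X) + adjoint A ∘L A) ∘L B = 1)
    (hlow : ∀ x : X, σ * ‖x‖ ≤ ‖Ahat x‖) (hΔ : ‖Ahat - A‖ ≤ Δ)
    (x xt : X) (hx : x ∈ S) (hxt : xt ∈ S)
    (y fv : Y) (hTay : ‖y - A (x - xt)‖ ≤ d₃ * ‖xt - x‖ ^ 2) (hfv : ‖fv‖ ≤ δt) :
    ‖xt - (x - P ((B ∘L adjoint A) (y + fv)))‖ ≤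
      (ε / 3 + 2 * Δ / σ + d₃ * ‖xt - x‖ / (2 * Real.sqrt α)) * ‖xt - x‖
        + δt / (2 * Real.sqrt α) := by
  have hs0 : 0 < Real.sqrt α := Real.sqrt_pos.2 hα
  have hBA : B (adjoint A (A (x - xt))) = (x - xt) - α • B (x - xt) := by
    have h := congrArg (fun T : X →L[ℝ] X => T (x - xt)) hB1
    simp only [comp_apply, add_apply, smul_apply, one_apply, map_add, map_smul] at h
    rw [eq_sub_iff_add_eq]
    rw [add_comm]
    exact h
  have hkey : xt - (x - P ((B ∘L adjoint A) (y + fv)))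
      = P (α • B (xt - x) + B (adjoint A (y - A (x - xt))) + B (adjoint A fv)) := by
    have hd : xt - (x - P ((B ∘L adjoint A) (y + fv)))
        = (xt - x) + P ((B ∘L adjoint A) (y + fv)) := by abel
    have hPx : (xt - x) = P (xt - x) := (aux_proj_id S P hP (S.sub_mem hxt hx)).symm
    have hy : y + fv = (A (x - xt)) + (y - A (x - xt)) + fv := by abel
    have hBneg : α • B (xt - x) = -(α • B (x - xt)) := by
      have h9 : (xt - x) = -(x - xt) := by abel
      rw [h9, map_neg, smul_neg]
    have hv : (xt - x) + (B ∘L adjoint A) (y + fv)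
        = α • B (xt - x) + B (adjoint A (y - A (x - xt))) + B (adjoint A fv) := by
      rw [comp_apply, hy, map_add, map_add, map_add, map_add, hBA, hBneg]
      abel
    rw [hd]
    nth_rewrite 1 [hPx]
    rw [← map_add]
    exact congrArg P hv
  rw [hkey]
  have h1 : ‖P (α • B (xt - x) + B (adjoint A (y - A (x - xt))) + B (adjoint A fv))‖
      ≤ ‖α • B (xt - x)‖ + ‖B (adjoint A (y - A (x - xt)))‖ + ‖B (adjoint A fv)‖ := by
    refine (aux_proj_norm S P hP _).trans ?_
    exact norm_add₃_le
  refine h1.trans ?_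
  have t1 : ‖α • B (xt - x)‖ ≤ (ε / 3 + 2 * Δ / σ) * ‖xt - x‖ := by
    rw [norm_smul, Real.norm_eq_abs, abs_of_pos hα]
    exact aux_aB_bound hα hσ hε hε1 hεα hΔ0 hΔσ A Ahat B hB2 hlow hΔ (xt - x)
  have t2 : ‖B (adjoint A (y - A (x - xt)))‖ ≤ d₃ * ‖xt - x‖ ^ 2 / (2 * Real.sqrt α) := by
    refine (aux_RA_bound hα A B hB2 _).trans ?_
    exact div_le_div_of_nonneg_right hTay (by positivity) |>.trans_eq (by ring)
  have t3 : ‖B (adjoint A fv)‖ ≤ δt / (2 * Real.sqrt α) := by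
    refine (aux_RA_bound hα A B hB2 _).trans ?_
    exact div_le_div_of_nonneg_right hfv (by positivity)
  have hr : (ε / 3 + 2 * Δ / σ + d₃ * ‖xt - x‖ / (2 * Real.sqrt α)) * ‖xt - x‖
      + δt / (2 * Real.sqrt α)
      = (ε / 3 + 2 * Δ / σ) * ‖xt - x‖ + d₃ * ‖xt - x‖ ^ 2 / (2 * Real.sqrt α)
        + δt / (2 * Real.sqrt α) := by ring
  rw [hr]
  linarith

end Step

lemma sc_eps {ε d₀ : ℝ} (hε0 : 0 < ε) (hd₀ : 1 ≤ d₀) (hεd : ε * (2 + d₀) < 3) : ε ≤ 1 := by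
  nlinarith

lemma sc_q1 {ε d₀ : ℝ} (hε0 : 0 < ε) (hεd : ε * (2 + d₀) < 3) : ε * (1 + d₀) < 3 := by
  nlinarith

lemma sc_xx {u c ξ b : ℝ} (h : u ≤ (1 - ξ) * (1 - b) * c) (hc : 0 < c)
    (hξ0 : 0 < ξ) (hξ1 : ξ < 1) (hb0 : 0 ≤ b) (h1b : 0 < 1 - b) : u ≤ c := by
  nlinarith [mul_nonneg (mul_nonneg hξ0.le h1b.le) hc.le, mul_nonneg hb0 hc.le]

lemma sc_div_sigma {d₁ σ α X M : ℝ} (hd₁ : 0 < d₁) (hσ : 0 < σ) (hα : 0 < α)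
    (h2α : 2 * α ≤ σ ^ 2) (hσd₁ : σ ≤ d₁) (hM : 0 ≤ M) (hX : 27 * d₁ * X ≤ 4 * M * α) :
    2 * X / σ ≤ 4 / 27 * M := by
  rw [div_le_iff₀ hσ]
  nlinarith [mul_nonneg hM (by linarith : (0:ℝ) ≤ σ ^ 2 - 2 * α),
    mul_nonneg (mul_nonneg hM hσ.le) (by linarith : (0:ℝ) ≤ d₁ - σ)]

lemma sc_div_s {d₁ s α X M : ℝ} (hd₁ : 0 < d₁) (hs : 0 < s) (hs2 : s ^ 2 = α)
    (hsd₁ : s ≤ d₁) (hM : 0 ≤ M) (hX : 27 * d₁ * X ≤ 4 * M * α) :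
    X / (2 * s) ≤ 2 / 27 * M := by
  rw [div_le_iff₀ (by positivity)]
  nlinarith [mul_nonneg (mul_nonneg hM hs.le) (by linarith : (0:ℝ) ≤ d₁ - s)]

lemma sc_4T {d₁ σ α T : ℝ} (hd₁ : 0 < d₁) (hσ : 0 < σ) (hT : 0 ≤ T)
    (h2α : 2 * α ≤ σ ^ 2) (hσd₁ : σ ≤ d₁) (h27 : 27 * d₁ * T ≤ 12 * α) : 4 * T ≤ σ := by
  nlinarith [mul_nonneg hσ.le (by linarith : (0:ℝ) ≤ d₁ - σ), mul_pos hσ hd₁]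

lemma sc_12 {x α V : ℝ} (hα : 0 < α) (h3 : x ≤ 3) (hV : V ≤ 4 * x * α) : V ≤ 12 * α := by
  nlinarith

lemma sc_K {ε d₀ u w bb : ℝ} (hε0 : 0 < ε) (hd₀ : 1 ≤ d₀)
    (hu : u ≤ 4 / 27 * (ε * (d₀ + 1))) (hw : w ≤ 2 / 27 * (2 * (ε * d₀)))
    (hbb : bb = ε * (2 + d₀) / 3) : ε / 3 + u + w ≤ bb := by
  subst hbb; nlinarith

lemma sc_Kq {ε d₀ u w qq : ℝ} (hε0 : 0 < ε) (hd₀ : 1 ≤ d₀)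
    (hu : u ≤ 4 / 27 * (ε * d₀)) (hw : w ≤ 2 / 27 * (ε * d₀))
    (hqq : qq = ε * (1 + d₀) / 3) : ε / 3 + u + w ≤ qq := by
  subst hqq; nlinarith

lemma sc_bE {b γ u e0 e1 δ' : ℝ} (h : e1 ≤ b * e0 + δ') (he0 : e0 ≤ γ + u)
    (hb0 : 0 ≤ b) (hb1 : b ≤ 1) (hu : 0 ≤ u) : e1 ≤ b * γ + u + δ' := by
  nlinarith

lemma sc_c {b ξ c γ u v e1 : ℝ} (h : e1 ≤ b * γ + u + v) (hγ : γ ≤ c)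
    (hu : u ≤ (1 - ξ) * (1 - b) * c) (hv : v ≤ ξ * (1 - b) * c)
    (hb0 : 0 ≤ b) (hc : 0 ≤ c) : e1 ≤ c := by
  nlinarith

lemma sc_qc {q b ξ ε c δ' eN ej : ℝ} (h : eN ≤ q * ej + δ') (hej : ej ≤ c)
    (hq0 : 0 ≤ q) (hδ : δ' ≤ ξ * (1 - b) * c) (hξ1 : ξ ≤ 1) (h1b : 0 ≤ 1 - b)
    (hqb : q + ε / 3 = b) (hε0 : 0 < ε) (hc : 0 ≤ c) : eN ≤ c := by
  nlinarith [mul_le_mul_of_nonneg_left hej hq0,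
    mul_nonneg (mul_nonneg (sub_nonneg.2 hξ1) h1b) hc, mul_nonneg hε0.le hc]

lemma sc_alpha {α ε σ : ℝ} (hα : 0 < α) (hε1 : ε ≤ 1) (h : α * (3 - ε) ≤ ε * σ ^ 2) :
    3 * α ≤ ε * (α + σ ^ 2) ∧ 2 * α ≤ σ ^ 2 := by
  constructor
  · nlinarith
  · nlinarith [sq_nonneg σ]

set_option maxHeartbeats 4000000 in
/-- Convergence rate of the projected recursive Newton method with noisy data
(Theorem 2.2, explicit form). -/
theorem stmt_16 {X Y : Type*}
    [NormedAddCommGroup X] [InnerProductSpace ℝ X] [CompleteSpace X]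
    [NormedAddCommGroup Y] [InnerProductSpace ℝ Y] [CompleteSpace Y]
    (N J : ℕ) (hN : 1 ≤ N) (hJ : 1 ≤ J)
    (kl Δk : ℝ) (hΔk : 0 < Δk)
    (k : ℕ → ℝ) (hk : ∀ n : ℕ, k n = kl + n * Δk)
    (Xs : ℕ → Submodule ℝ X)
    (hXsclosed : ∀ n, n ≤ N → IsClosed ((Xs n : Set X)))
    (hXsmono : ∀ n, n < N → Xs n ≤ Xs (n + 1))
    (P : ℕ → X →L[ℝ] X)
    (hP : ∀ n, n ≤ N → ∀ x : X, P n x ∈ Xs n ∧ x - P n x ∈ (Xs n)ᗮ)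
    (F : X × ℝ → Y) (hF : ContDiff ℝ 2 F)
    (d₀ d₁ d₂ d₃ d₄ : ℝ) (hd₀ : 1 ≤ d₀) (hd₁ : 0 < d₁) (hd₂ : 0 < d₂)
    (hd₃ : 0 < d₃) (hd₄ : 0 < d₄)
    (hFr : ∀ (r : X) (κ : ℝ), ‖fderiv ℝ (fun r' => F (r', κ)) r‖ ≤ d₁)
    (hFk : ∀ (r : X) (κ : ℝ), ‖deriv (fun κ' => F (r, κ')) κ‖ ≤ d₂)
    (hFrr : ∀ (r : X) (κ : ℝ),
      ‖fderiv ℝ (fun r' => fderiv ℝ (fun r'' => F (r'', κ)) r') r‖ ≤ d₃)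
    (hFkr : ∀ (r : X) (κ : ℝ),
      ‖deriv (fun κ' => fderiv ℝ (fun r' => F (r', κ')) r) κ‖ ≤ d₄)
    (rt : ℕ → X)
    (hrtmem : ∀ n, n ≤ N → rt n ∈ Xs n)
    (hrtzero : ∀ n, n ≤ N → F (rt n, k n) = 0)
    (hrtstep : ∀ n, n < N → ‖rt (n + 1) - rt n‖ ≤ d₀ * Δk)
    (σ : ℝ) (hσ : 0 < σ)
    (hlow : ∀ n, n ≤ N → ∀ x : X,
      σ * ‖x‖ ≤ ‖fderiv ℝ (fun r' => F (r', k n)) (rt n) x‖)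
    (δt : ℝ) (hδt : 0 ≤ δt)
    (f : ℕ → Y) (hf : ∀ n, 1 ≤ n → n ≤ N → ‖f n‖ ≤ δt)
    (ε ξ α : ℝ) (hε0 : 0 < ε) (hε1 : ε < 3 / (2 + d₀))
    (hξ0 : 0 < ξ) (hξ1 : ξ < 1)
    (hα : 0 < α) (hαle : α ≤ ε * σ ^ 2 / (3 - ε))
    (c₀ q b : ℝ)
    (hc₀ : c₀ = 4 * ε / (3 * d₃ * (9 * d₁ + Real.sqrt α)))
    (hqdef : q = ε * (1 + d₀) / 3)
    (hbdef : b = ε * (2 + d₀) / 3)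
    (hstep1 : 9 * d₁ * d₄ / (4 * α) * Δk ≤ ε / 3)
    (hstep2 : Δk * (d₀ + d₂ / (2 * Real.sqrt α)) ≤ (1 - ξ) * (1 - b) * d₀ * c₀ * α)
    (hstep3 : δt / (2 * Real.sqrt α) ≤ ξ * (1 - b) * d₀ * c₀ * α)
    (r : ℕ → X) (rr : ℕ → ℕ → X)
    (A : ℕ → ℕ → X →L[ℝ] Y)
    (hA : ∀ n, n < N → ∀ j, j < J →
      A n j = fderiv ℝ (fun r' => F (r', k (n + 1))) (rr n j))
    (B : ℕ → ℕ → X →L[ℝ] X)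
    (hB : ∀ n, n < N → ∀ j, j < J →
      B n j ∘L (α • (1 : X →L[ℝ] X) +
        ContinuousLinearMap.adjoint (A n j) ∘L A n j) = 1 ∧
      (α • (1 : X →L[ℝ] X) +
        ContinuousLinearMap.adjoint (A n j) ∘L A n j) ∘L B n j = 1)
    (hrr0 : ∀ n, n < N → rr n 0 = r n)
    (hrrstep : ∀ n, n < N → ∀ j, j < J →
      rr n (j + 1) = rr n j - P (n + 1)
        ((B n j ∘L ContinuousLinearMap.adjoint (A n j))
          (F (rr n j, k (n + 1)) + f (n + 1))))
    (hrJ : ∀ n, n < N → r (n + 1) = rr n J)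
    (hr0mem : r 0 ∈ Xs 0)
    (hinit : ‖rt 0 - r 0‖ ≤ d₀ * c₀ * α) :
    (∀ n, n ≤ N → ‖rt n - r n‖ ≤ d₀ * c₀ * α) ∧
    ‖rt N - r N‖ ≤
      (δt / (2 * Real.sqrt α * (1 - q)) +
        q ^ (J - 1) * Δk * (d₀ + d₂ / (2 * Real.sqrt α))) / (1 - q ^ (J - 1) * b) +
      (q ^ (J - 1) * b) ^ N * (d₀ * c₀ * α) := by
  classical
  have hs0 : 0 < Real.sqrt α := Real.sqrt_pos.2 hα
  have hs2 : Real.sqrt α ^ 2 = α := Real.sq_sqrt hα.le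
  have h2s : 0 < 2 * Real.sqrt α := by linarith only [hs0]
  have hd₀0 : (0:ℝ) < d₀ := lt_of_lt_of_le one_pos hd₀
  have h2d₀ : (0:ℝ) < 2 + d₀ := by linarith only [hd₀0]
  have hεd : ε * (2 + d₀) < 3 := by
    have h := (lt_div_iff₀ h2d₀).1 hε1
    linarith only [h]
  have hε1' : ε ≤ 1 := sc_eps hε0 hd₀ hεd
  have hq0 : 0 < q := by
    rw [hqdef]; apply div_pos (mul_pos hε0 (by linarith only [hd₀0])) (by norm_num)
  have hq1 : q < 1 := by
    rw [hqdef, div_lt_one (by norm_num)]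
    exact sc_q1 hε0 hεd
  have hb0 : 0 < b := by
    rw [hbdef]; exact div_pos (mul_pos hε0 h2d₀) (by norm_num)
  have hb1 : b < 1 := by
    rw [hbdef, div_lt_one (by norm_num)]; linarith only [hεd]
  have hqb : q + ε / 3 = b := by rw [hqdef, hbdef]; ring
  have h1q : 0 < 1 - q := by linarith only [hq1]
  have h1b : 0 < 1 - b := by linarith only [hb1]
  have hden : 0 < 3 * d₃ * (9 * d₁ + Real.sqrt α) := by positivity
  have hc₀0 : 0 < c₀ := by
    rw [hc₀]; exact div_pos (by linarith only [hε0]) hden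
  have hcpos : 0 < d₀ * c₀ * α := mul_pos (mul_pos hd₀0 hc₀0) hα
  have hkey : 3 * d₃ * (9 * d₁ + Real.sqrt α) * c₀ = 4 * ε := by
    rw [hc₀]; field_simp
  have hδ'0 : 0 ≤ δt / (2 * Real.sqrt α) := div_nonneg hδt h2s.le
  have hδ'le : δt / (2 * Real.sqrt α) ≤ ξ * (1 - b) * (d₀ * c₀ * α) := by
    calc δt / (2 * Real.sqrt α) ≤ ξ * (1 - b) * d₀ * c₀ * α := hstep3
      _ = ξ * (1 - b) * (d₀ * c₀ * α) := by ring
  have hΔk2 : d₀ * Δk ≤ (1 - ξ) * (1 - b) * (d₀ * c₀ * α) := by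
    have h2 : 0 ≤ Δk * (d₂ / (2 * Real.sqrt α)) :=
      mul_nonneg hΔk.le (div_nonneg hd₂.le h2s.le)
    have h1 : d₀ * Δk ≤ Δk * (d₀ + d₂ / (2 * Real.sqrt α)) := by linarith only [h2]
    calc d₀ * Δk ≤ (1 - ξ) * (1 - b) * d₀ * c₀ * α := h1.trans hstep2
      _ = (1 - ξ) * (1 - b) * (d₀ * c₀ * α) := by ring
  have hΔkc : d₀ * Δk ≤ d₀ * c₀ * α := sc_xx hΔk2 hcpos hξ0 hξ1 hb0.le h1b
  have hpow0 : 0 ≤ q ^ (J - 1) := pow_nonneg hq0.le _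
  have hpow1 : q ^ (J - 1) ≤ 1 := pow_le_one₀ hq0.le hq1.le
  have hlam0 : 0 ≤ q ^ (J - 1) * b := mul_nonneg hpow0 hb0.le
  have hlam1 : q ^ (J - 1) * b < 1 :=
    lt_of_le_of_lt (mul_le_of_le_one_left hb0.le hpow1) hb1
  have h1lam : 0 < 1 - q ^ (J - 1) * b := by linarith only [hlam1]
  have hD0 : 0 ≤ δt / (2 * Real.sqrt α) / (1 - q) := div_nonneg hδ'0 h1q.le
  have hδ'D : δt / (2 * Real.sqrt α) ≤ δt / (2 * Real.sqrt α) / (1 - q) := by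
    rw [le_div_iff₀ h1q]
    have h1 : 0 ≤ δt / (2 * Real.sqrt α) * q := mul_nonneg hδ'0 hq0.le
    linarith only [h1]
  have hq2nn : 0 ≤ q ^ (J - 1) * Δk * (d₀ + d₂ / (2 * Real.sqrt α)) :=
    mul_nonneg (mul_nonneg hpow0 hΔk.le)
      (add_nonneg hd₀0.le (div_nonneg hd₂.le h2s.le))
  have hC0 : 0 ≤ δt / (2 * Real.sqrt α) / (1 - q)
      + q ^ (J - 1) * Δk * (d₀ + d₂ / (2 * Real.sqrt α)) := add_nonneg hD0 hq2nn
  rcases subsingleton_or_nontrivial X with hsub | hnontriv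
  · constructor
    · intro n hn
      have h0 : rt n - r n = 0 := Subsingleton.elim _ _
      rw [h0, norm_zero]; exact hcpos.le
    · have h0 : rt N - r N = 0 := Subsingleton.elim _ _
      rw [h0, norm_zero]
      have h1 : 0 ≤ (δt / (2 * Real.sqrt α * (1 - q)) +
          q ^ (J - 1) * Δk * (d₀ + d₂ / (2 * Real.sqrt α))) / (1 - q ^ (J - 1) * b) := by
        apply div_nonneg _ h1lam.le
        have h3 : 0 ≤ δt / (2 * Real.sqrt α * (1 - q)) :=
          div_nonneg hδt (by positivity)
        linarith only [h3, hq2nn]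
      have h2 : 0 ≤ (q ^ (J - 1) * b) ^ N * (d₀ * c₀ * α) :=
        mul_nonneg (pow_nonneg hlam0 N) hcpos.le
      linarith only [h1, h2]
  -- main case
  obtain ⟨x₀, hx₀⟩ := exists_ne (0 : X)
  have hx₀n : 0 < ‖x₀‖ := norm_pos_iff.2 hx₀
  have hσd₁ : σ ≤ d₁ := by
    have h1 := hlow 0 (Nat.zero_le N) x₀
    have h2 := (fderiv ℝ (fun r' => F (r', k 0)) (rt 0)).le_opNorm x₀
    have h3 := mul_le_mul_of_nonneg_right (hFr (rt 0) (k 0)) (norm_nonneg x₀)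
    have h4 : σ * ‖x₀‖ ≤ d₁ * ‖x₀‖ := h1.trans (h2.trans h3)
    exact le_of_mul_le_mul_right h4 hx₀n
  have h3ε : 0 < 3 - ε := by linarith only [hε1']
  have hαrel : α * (3 - ε) ≤ ε * σ ^ 2 := by
    have h4 := (le_div_iff₀ h3ε).1 hαle
    linarith only [h4]
  have hεα3 : 3 * α ≤ ε * (α + σ ^ 2) := (sc_alpha hα hε1' hαrel).1
  have h2α : 2 * α ≤ σ ^ 2 := (sc_alpha hα hε1' hαrel).2
  have hsσ : Real.sqrt α ≤ σ := by
    have h5 : α ≤ σ ^ 2 := by linarith only [h2α, hα]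
    calc Real.sqrt α ≤ Real.sqrt (σ ^ 2) := Real.sqrt_le_sqrt h5
      _ = σ := Real.sqrt_sq hσ.le
  have hsd₁ : Real.sqrt α ≤ d₁ := hsσ.trans hσd₁
  have h27nn : (0:ℝ) ≤ 27 * d₁ * d₃ :=
    mul_nonneg (mul_nonneg (by norm_num) hd₁.le) hd₃.le
  have hd₃c₀B : 27 * d₁ * (d₃ * c₀) ≤ 4 * ε := by
    have h9 : 0 ≤ 3 * d₃ * Real.sqrt α * c₀ := by positivity
    have h10 : 27 * d₁ * (d₃ * c₀) = 4 * ε - 3 * d₃ * Real.sqrt α * c₀ := by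
      linear_combination hkey
    linarith only [h9, h10]
  have hd₃cB : 27 * d₁ * (d₃ * (d₀ * c₀ * α)) ≤ 4 * ε * d₀ * α := by
    have h6 : (27 * d₁ * (d₃ * c₀)) * (d₀ * α) ≤ (4 * ε) * (d₀ * α) :=
      mul_le_mul_of_nonneg_right hd₃c₀B (by positivity)
    calc 27 * d₁ * (d₃ * (d₀ * c₀ * α)) = (27 * d₁ * (d₃ * c₀)) * (d₀ * α) := by ring
      _ ≤ (4 * ε) * (d₀ * α) := h6
      _ = 4 * ε * d₀ * α := by ring
  have hd₄ΔkB : 27 * d₁ * (d₄ * Δk) ≤ 4 * ε * α := by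
    have h8 := hstep1
    rw [div_mul_eq_mul_div, div_le_iff₀ (by positivity)] at h8
    linarith only [h8]
  have hεd₀1 : ε * (d₀ + 1) ≤ 3 := by linarith only [hεd, hε0]
  have hεd₀0 : (0:ℝ) ≤ ε * (d₀ + 1) := mul_nonneg hε0.le (by linarith only [hd₀0])
  -- per-outer-step analysis
  have outerstep : ∀ n, n < N → ‖rt n - r n‖ ≤ d₀ * c₀ * α → r n ∈ Xs n →
      ‖rt (n+1) - r (n+1)‖ ≤ d₀ * c₀ * α ∧ r (n+1) ∈ Xs (n+1) ∧
        ‖rt (n+1) - r (n+1)‖ ≤ (q ^ (J-1) * b) * ‖rt n - r n‖ +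
          (δt / (2 * Real.sqrt α) / (1 - q)
            + q ^ (J-1) * Δk * (d₀ + d₂ / (2 * Real.sqrt α))) := by
    intro n hn hγ hrmem
    have hn1 : n + 1 ≤ N := hn
    have hF0 : F (rt (n+1), k (n+1)) = 0 := hrtzero _ hn1
    have hPf := hP (n+1) hn1
    have hkdiff : k (n+1) - k n = Δk := by rw [hk, hk]; push_cast; ring
    have hd₀Δkn : ‖rt (n+1) - rt n‖ ≤ d₀ * Δk := hrtstep n hn
    have hmem : ∀ j, j ≤ J → rr n j ∈ Xs (n+1) := by
      intro j
      induction j with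
      | zero => intro _; rw [hrr0 n hn]; exact hXsmono n hn hrmem
      | succ i ih =>
        intro hi
        rw [hrrstep n hn i (by omega)]
        exact Submodule.sub_mem _ (ih (by omega)) (hPf _).1
    have stepgen : ∀ j, j < J → ∀ (Ahat : X →L[ℝ] Y) (Δ : ℝ), 0 ≤ Δ → 4 * Δ ≤ σ →
        (∀ x : X, σ * ‖x‖ ≤ ‖Ahat x‖) → ‖Ahat - A n j‖ ≤ Δ →
        ‖rt (n+1) - rr n (j+1)‖ ≤
          (ε/3 + 2*Δ/σ + d₃ * ‖rt (n+1) - rr n j‖ / (2 * Real.sqrt α))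
            * ‖rt (n+1) - rr n j‖ + δt / (2 * Real.sqrt α) := by
      intro j hj Ahat Δ hΔ0' hΔσ' hlowA hΔA
      rw [hrrstep n hn j hj]
      have hTay : ‖F (rr n j, k (n+1)) - (A n j) (rr n j - rt (n+1))‖
          ≤ d₃ * ‖rt (n+1) - rr n j‖^2 := by
        have h1 := aux_taylor F hF hd₃.le hFrr (k (n+1)) (rr n j) (rt (n+1))
        rw [← hA n hn j hj] at h1
        have h2 : F (rr n j, k (n+1)) - (A n j) (rr n j - rt (n+1))
            = -(F (rt (n+1), k (n+1)) - F (rr n j, k (n+1))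
                - (A n j) (rt (n+1) - rr n j)) := by
          rw [hF0, map_sub, map_sub]; abel
        rw [h2, norm_neg]
        exact h1
      exact aux_newton_step hα hσ hε0 hε1' hεα3 hΔ0' hΔσ' hd₃.le hδt (Xs (n+1)) (P (n+1)) hPf
        (A n j) Ahat (B n j) (hB n hn j hj).1 (hB n hn j hj).2 hlowA hΔA
        (rr n j) (rt (n+1)) (hmem j hj.le) (hrtmem _ hn1)
        (F (rr n j, k (n+1))) (f (n+1)) hTay (hf (n+1) (by omega) (by omega))
    -- step 0
    have he0 : ‖rt (n+1) - rr n 0‖ ≤ ‖rt n - r n‖ + d₀ * Δk := by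
      rw [hrr0 n hn]
      have h1 : rt (n+1) - r n = (rt (n+1) - rt n) + (rt n - r n) := by abel
      rw [h1]
      calc ‖(rt (n+1) - rt n) + (rt n - r n)‖ ≤ ‖rt (n+1) - rt n‖ + ‖rt n - r n‖ :=
            norm_add_le _ _
        _ ≤ ‖rt n - r n‖ + d₀ * Δk := by linarith only [hd₀Δkn]
    have he0c : ‖rt (n+1) - rr n 0‖ ≤ 2 * (d₀ * c₀ * α) := by
      linarith only [he0, hγ, hΔkc]
    have hAhat0 : ‖fderiv ℝ (fun r' => F (r', k n)) (rt n) - A n 0‖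
        ≤ d₃ * ‖rt n - r n‖ + d₄ * Δk := by
      have hmid := aux_lip_r F hF hFrr (k n) (r n) (rt n)
      have hA0 : A n 0 = fderiv ℝ (fun r' => F (r', k (n+1))) (r n) := by
        rw [hA n hn 0 (by omega), hrr0 n hn]
      have hmid2 : ‖fderiv ℝ (fun r' => F (r', k n)) (r n) - A n 0‖ ≤ d₄ * Δk := by
        rw [hA0, norm_sub_rev]
        have h5 := aux_lip_k F hF hFkr (r n) (k n) (k (n+1))
        have h6 : |k (n+1) - k n| = Δk := by rw [hkdiff]; exact abs_of_pos hΔk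
        rw [h6] at h5
        exact h5
      calc ‖fderiv ℝ (fun r' => F (r', k n)) (rt n) - A n 0‖
          ≤ ‖fderiv ℝ (fun r' => F (r', k n)) (rt n)
              - fderiv ℝ (fun r' => F (r', k n)) (r n)‖
            + ‖fderiv ℝ (fun r' => F (r', k n)) (r n) - A n 0‖ :=
            norm_sub_le_norm_sub_add_norm_sub _ _ _
        _ ≤ d₃ * ‖rt n - r n‖ + d₄ * Δk := by
            have h7 : ‖rt n - (r n)‖ = ‖rt n - r n‖ := rfl
            linarith only [hmid, hmid2]
    have hΔ₀0 : 0 ≤ d₃ * ‖rt n - r n‖ + d₄ * Δk :=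
      add_nonneg (mul_nonneg hd₃.le (norm_nonneg _)) (mul_nonneg hd₄.le hΔk.le)
    have k1 : 27 * d₁ * (d₃ * ‖rt n - r n‖) ≤ 4 * ε * d₀ * α := by
      have t := mul_le_mul_of_nonneg_left hγ h27nn
      calc 27 * d₁ * (d₃ * ‖rt n - r n‖) = 27 * d₁ * d₃ * ‖rt n - r n‖ := by ring
        _ ≤ 27 * d₁ * d₃ * (d₀ * c₀ * α) := t
        _ = 27 * d₁ * (d₃ * (d₀ * c₀ * α)) := by ring
        _ ≤ 4 * ε * d₀ * α := hd₃cB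
    have k2 : 27 * d₁ * (d₃ * ‖rt n - r n‖ + d₄ * Δk) ≤ 4 * (ε * (d₀ + 1)) * α := by
      have : 27 * d₁ * (d₃ * ‖rt n - r n‖ + d₄ * Δk)
          = 27 * d₁ * (d₃ * ‖rt n - r n‖) + 27 * d₁ * (d₄ * Δk) := by ring
      rw [this]
      have h11 : 4 * (ε * (d₀ + 1)) * α = 4 * ε * d₀ * α + 4 * ε * α := by ring
      rw [h11]
      exact add_le_add k1 hd₄ΔkB
    have hΔ₀σ : 4 * (d₃ * ‖rt n - r n‖ + d₄ * Δk) ≤ σ := by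
      have k4 : 27 * d₁ * (d₃ * ‖rt n - r n‖ + d₄ * Δk) ≤ 12 * α := sc_12 hα hεd₀1 k2
      exact sc_4T hd₁ hσ hΔ₀0 h2α hσd₁ k4
    have hK₀ : ε/3 + 2*(d₃ * ‖rt n - r n‖ + d₄ * Δk)/σ
        + d₃ * ‖rt (n+1) - rr n 0‖ / (2 * Real.sqrt α) ≤ b := by
      have c1 : 2*(d₃ * ‖rt n - r n‖ + d₄ * Δk)/σ ≤ 4/27 * (ε * (d₀ + 1)) :=
        sc_div_sigma hd₁ hσ hα h2α hσd₁ hεd₀0 k2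
      have c2 : d₃ * ‖rt (n+1) - rr n 0‖ / (2 * Real.sqrt α) ≤ 2/27 * (2 * (ε * d₀)) := by
        refine sc_div_s hd₁ hs0 hs2 hsd₁
          (by positivity : (0:ℝ) ≤ 2 * (ε * d₀)) ?_
        have t := mul_le_mul_of_nonneg_left he0c h27nn
        calc 27 * d₁ * (d₃ * ‖rt (n+1) - rr n 0‖)
            = 27 * d₁ * d₃ * ‖rt (n+1) - rr n 0‖ := by ring
          _ ≤ 27 * d₁ * d₃ * (2 * (d₀ * c₀ * α)) := t
          _ = 2 * (27 * d₁ * (d₃ * (d₀ * c₀ * α))) := by ring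
          _ ≤ 2 * (4 * ε * d₀ * α) := by linarith only [hd₃cB]
          _ = 4 * (2 * (ε * d₀)) * α := by ring
      exact sc_K hε0 hd₀ c1 c2 hbdef
    have hstep0 := stepgen 0 (by omega) (fderiv ℝ (fun r' => F (r', k n)) (rt n))
      (d₃ * ‖rt n - r n‖ + d₄ * Δk) hΔ₀0 hΔ₀σ (hlow n (by omega)) hAhat0
    have hE1 : ‖rt (n+1) - rr n 1‖ ≤ b * ‖rt (n+1) - rr n 0‖ + δt / (2 * Real.sqrt α) :=
      hstep0.trans (add_le_add
        (mul_le_mul_of_nonneg_right hK₀ (norm_nonneg _)) le_rfl)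
    have hE1' : ‖rt (n+1) - rr n 1‖
        ≤ b * ‖rt n - r n‖ + d₀ * Δk + δt / (2 * Real.sqrt α) :=
      sc_bE hE1 he0 hb0.le hb1.le (mul_nonneg hd₀0.le hΔk.le)
    have hE1c : ‖rt (n+1) - rr n 1‖ ≤ d₀ * c₀ * α := by
      have h12 : ‖rt (n+1) - rr n 1‖
          ≤ b * ‖rt n - r n‖ + d₀ * Δk + δt / (2 * Real.sqrt α) := hE1'
      exact sc_c h12 hγ hΔk2 hδ'le hb0.le hcpos.le
    -- q-steps
    have stepq : ∀ j, 1 ≤ j → j < J → ‖rt (n+1) - rr n j‖ ≤ d₀ * c₀ * α →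
        ‖rt (n+1) - rr n (j+1)‖ ≤ q * ‖rt (n+1) - rr n j‖ + δt / (2 * Real.sqrt α) := by
      intro j hj1 hjJ hejc
      have hΔA : ‖fderiv ℝ (fun r' => F (r', k (n+1))) (rt (n+1)) - A n j‖
          ≤ d₃ * ‖rt (n+1) - rr n j‖ := by
        rw [hA n hn j hjJ]
        exact aux_lip_r F hF hFrr (k (n+1)) (rr n j) (rt (n+1))
      have hΔ0' : 0 ≤ d₃ * ‖rt (n+1) - rr n j‖ := mul_nonneg hd₃.le (norm_nonneg _)
      have k5 : 27 * d₁ * (d₃ * ‖rt (n+1) - rr n j‖) ≤ 4 * (ε * d₀) * α := by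
        have t := mul_le_mul_of_nonneg_left hejc h27nn
        calc 27 * d₁ * (d₃ * ‖rt (n+1) - rr n j‖)
            = 27 * d₁ * d₃ * ‖rt (n+1) - rr n j‖ := by ring
          _ ≤ 27 * d₁ * d₃ * (d₀ * c₀ * α) := t
          _ = 27 * d₁ * (d₃ * (d₀ * c₀ * α)) := by ring
          _ ≤ 4 * ε * d₀ * α := hd₃cB
          _ = 4 * (ε * d₀) * α := by ring
      have hεd₀3 : ε * d₀ ≤ 3 := by linarith only [hεd₀1, hε0]
      have hΔσ' : 4 * (d₃ * ‖rt (n+1) - rr n j‖) ≤ σ := by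
        have k6 : 27 * d₁ * (d₃ * ‖rt (n+1) - rr n j‖) ≤ 12 * α := sc_12 hα hεd₀3 k5
        exact sc_4T hd₁ hσ hΔ0' h2α hσd₁ k6
      have hKq : ε/3 + 2*(d₃ * ‖rt (n+1) - rr n j‖)/σ
          + d₃ * ‖rt (n+1) - rr n j‖ / (2 * Real.sqrt α) ≤ q := by
        have c1 : 2*(d₃ * ‖rt (n+1) - rr n j‖)/σ ≤ 4/27 * (ε * d₀) :=
          sc_div_sigma hd₁ hσ hα h2α hσd₁ (by positivity) k5
        have c2 : d₃ * ‖rt (n+1) - rr n j‖ / (2 * Real.sqrt α) ≤ 2/27 * (ε * d₀) :=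
          sc_div_s hd₁ hs0 hs2 hsd₁ (by positivity) k5
        exact sc_Kq hε0 hd₀ c1 c2 hqdef
      have hs := stepgen j hjJ _ _ hΔ0' hΔσ' (hlow (n+1) hn1) hΔA
      exact hs.trans (add_le_add
        (mul_le_mul_of_nonneg_right hKq (norm_nonneg _)) le_rfl)
    -- inner induction
    have inner : ∀ i, i < J → ‖rt (n+1) - rr n (i+1)‖ ≤ d₀ * c₀ * α ∧
        ‖rt (n+1) - rr n (i+1)‖
          ≤ q^i * (b * ‖rt n - r n‖ + d₀ * Δk + δt / (2 * Real.sqrt α))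
            + (1 - q^i) * (δt / (2 * Real.sqrt α) / (1 - q)) := by
      intro i
      induction i with
      | zero =>
        intro _
        refine ⟨hE1c, ?_⟩
        simpa using hE1'
      | succ i ih =>
        intro hiJ
        obtain ⟨ih1, ih2⟩ := ih (by omega)
        have hst := stepq (i+1) (by omega) hiJ ih1
        constructor
        · exact sc_qc hst ih1 hq0.le hδ'le hξ1.le h1b.le hqb hε0 hcpos.le
        · have h7 : q * ‖rt (n+1) - rr n (i+1)‖
              ≤ q * (q^i * (b * ‖rt n - r n‖ + d₀ * Δk + δt / (2 * Real.sqrt α))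
                + (1 - q^i) * (δt / (2 * Real.sqrt α) / (1 - q))) :=
            mul_le_mul_of_nonneg_left ih2 hq0.le
          have h8 : δt / (2 * Real.sqrt α)
              = (1 - q) * (δt / (2 * Real.sqrt α) / (1 - q)) := by
            rw [mul_comm (1 - q), div_mul_cancel₀ _ (ne_of_gt h1q)]
          calc ‖rt (n+1) - rr n (i+1+1)‖
              ≤ q * ‖rt (n+1) - rr n (i+1)‖ + δt / (2 * Real.sqrt α) := hst
            _ ≤ q * (q^i * (b * ‖rt n - r n‖ + d₀ * Δk + δt / (2 * Real.sqrt α))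
                + (1 - q^i) * (δt / (2 * Real.sqrt α) / (1 - q)))
                + (1 - q) * (δt / (2 * Real.sqrt α) / (1 - q)) := by
                rw [← h8]; linarith only [hst, h7]
            _ = q^(i+1) * (b * ‖rt n - r n‖ + d₀ * Δk + δt / (2 * Real.sqrt α))
                + (1 - q^(i+1)) * (δt / (2 * Real.sqrt α) / (1 - q)) := by ring
    obtain ⟨hJc, hJbound⟩ := inner (J-1) (by omega)
    have hJeq : J - 1 + 1 = J := by omega
    rw [hJeq] at hJc hJbound
    have hrneq : ‖rt (n+1) - r (n+1)‖ = ‖rt (n+1) - rr n J‖ := by rw [hrJ n hn]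
    refine ⟨by rw [hrneq]; exact hJc, by rw [hrJ n hn]; exact hmem J le_rfl, ?_⟩
    rw [hrneq]
    have t1 : q^(J-1) * (d₀ * Δk) ≤ q^(J-1) * Δk * (d₀ + d₂ / (2 * Real.sqrt α)) := by
      have h13 : 0 ≤ q^(J-1) * Δk * (d₂ / (2 * Real.sqrt α)) :=
        mul_nonneg (mul_nonneg hpow0 hΔk.le) (div_nonneg hd₂.le h2s.le)
      linarith only [h13]
    have t2 : q^(J-1) * (δt / (2 * Real.sqrt α))
        ≤ q^(J-1) * (δt / (2 * Real.sqrt α) / (1 - q)) :=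
      mul_le_mul_of_nonneg_left hδ'D hpow0
    have hfinal : q^(J-1) * (b * ‖rt n - r n‖ + d₀ * Δk + δt / (2 * Real.sqrt α))
        + (1 - q^(J-1)) * (δt / (2 * Real.sqrt α) / (1 - q))
        ≤ (q ^ (J-1) * b) * ‖rt n - r n‖ +
          (δt / (2 * Real.sqrt α) / (1 - q)
            + q ^ (J-1) * Δk * (d₀ + d₂ / (2 * Real.sqrt α))) := by
      linarith only [t1, t2]
    linarith only [hJbound, hfinal]
  -- outer induction
  have outer : ∀ m, m ≤ N → ‖rt m - r m‖ ≤ d₀ * c₀ * α ∧ r m ∈ Xs m ∧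
      ‖rt m - r m‖ ≤ (q^(J-1)*b)^m * (d₀ * c₀ * α)
        + (1 - (q^(J-1)*b)^m) * ((δt / (2 * Real.sqrt α) / (1 - q)
            + q ^ (J-1) * Δk * (d₀ + d₂ / (2 * Real.sqrt α))) / (1 - q^(J-1)*b)) := by
    intro m
    induction m with
    | zero =>
      intro _
      refine ⟨hinit, hr0mem, ?_⟩
      simpa using hinit
    | succ m ih =>
      intro hm
      have hm' : m < N := by omega
      obtain ⟨i1, i2, i3⟩ := ih (by omega)
      obtain ⟨o1, o2, o3⟩ := outerstep m hm' i1 i2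
      refine ⟨o1, o2, ?_⟩
      have hCeq : δt / (2 * Real.sqrt α) / (1 - q)
            + q ^ (J-1) * Δk * (d₀ + d₂ / (2 * Real.sqrt α))
          = (1 - q^(J-1)*b) * ((δt / (2 * Real.sqrt α) / (1 - q)
            + q ^ (J-1) * Δk * (d₀ + d₂ / (2 * Real.sqrt α))) / (1 - q^(J-1)*b)) := by
        rw [mul_comm (1 - q^(J-1)*b), div_mul_cancel₀ _ (ne_of_gt h1lam)]
      have h7 : (q^(J-1)*b) * ‖rt m - r m‖ ≤ (q^(J-1)*b) * ((q^(J-1)*b)^m * (d₀ * c₀ * α)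
          + (1 - (q^(J-1)*b)^m) * ((δt / (2 * Real.sqrt α) / (1 - q)
            + q ^ (J-1) * Δk * (d₀ + d₂ / (2 * Real.sqrt α))) / (1 - q^(J-1)*b))) :=
        mul_le_mul_of_nonneg_left i3 hlam0
      calc ‖rt (m+1) - r (m+1)‖ ≤ (q^(J-1)*b) * ‖rt m - r m‖ +
            (δt / (2 * Real.sqrt α) / (1 - q)
              + q ^ (J-1) * Δk * (d₀ + d₂ / (2 * Real.sqrt α))) := o3
        _ ≤ (q^(J-1)*b) * ((q^(J-1)*b)^m * (d₀ * c₀ * α)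
              + (1 - (q^(J-1)*b)^m) * ((δt / (2 * Real.sqrt α) / (1 - q)
                + q ^ (J-1) * Δk * (d₀ + d₂ / (2 * Real.sqrt α))) / (1 - q^(J-1)*b)))
            + (1 - q^(J-1)*b) * ((δt / (2 * Real.sqrt α) / (1 - q)
              + q ^ (J-1) * Δk * (d₀ + d₂ / (2 * Real.sqrt α))) / (1 - q^(J-1)*b)) := by
            rw [← hCeq]; linarith only [h7]
        _ = (q^(J-1)*b)^(m+1) * (d₀ * c₀ * α)
            + (1 - (q^(J-1)*b)^(m+1)) * ((δt / (2 * Real.sqrt α) / (1 - q)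
              + q ^ (J-1) * Δk * (d₀ + d₂ / (2 * Real.sqrt α))) / (1 - q^(J-1)*b)) := by ring
  constructor
  · intro n hn'
    exact (outer n hn').1
  · obtain ⟨-, -, h⟩ := outer N le_rfl
    have hCD0 : 0 ≤ (δt / (2 * Real.sqrt α) / (1 - q)
        + q ^ (J-1) * Δk * (d₀ + d₂ / (2 * Real.sqrt α))) / (1 - q^(J-1)*b) :=
      div_nonneg hC0 h1lam.le
    have hp2 : 0 ≤ (q^(J-1)*b)^N := pow_nonneg hlam0 N
    have hfin : ‖rt N - r N‖ ≤ (δt / (2 * Real.sqrt α) / (1 - q)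
        + q ^ (J-1) * Δk * (d₀ + d₂ / (2 * Real.sqrt α))) / (1 - q^(J-1)*b)
        + (q^(J-1)*b)^N * (d₀ * c₀ * α) := by
      linarith only [h, mul_nonneg hp2 hCD0]
    have hdd : δt / (2 * Real.sqrt α) / (1 - q) = δt / (2 * Real.sqrt α * (1 - q)) :=
      div_div _ _ _
    rw [hdd] at hfin
    exact hfin
end

section
/- Convergence of the multi-level projected Newton method (Theorem 3.1, explicit form): adopt the setting of the noisy projected recursive Newton method, namely: real Hilbert spaces X, Y; Δk > 0 and k_n := k_l + nΔk for n = 0,…,N; closed subspaces X₀ ⊆ … ⊆ X_N of X with orthogonal projections P_n; F : X × ℝ → Y twice continuously Fréchet differentiable with ‖∂_rF‖ ≤ d₁, ‖∂_kF‖ ≤ d₂, ‖∂²_{rr}F‖ ≤ d₃, ‖∂²_{kr}F‖ ≤ d₄ everywhere; r̃_n ∈ X_n with F(r̃_n, k_n) = 0 and ‖r̃_{n+1} − r̃_n‖ ≤ d₀Δk for d₀ ≥ 1; noise vectors f_n ∈ Y with ‖f_n‖ ≤ δ̃; and ε with 0 < ε < 3/(2 + d₀), q := ε(1 + d₀)/3,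 b := ε(2 + d₀)/3, c₀(β) := 4ε/(3 d₃ (9 d₁ + √β)) for β > 0. Let 0 = n₀ < n₁ < … < n_M = N be a partition of the frequency indices into M sub-intervals, and for m = 1,…,M let σ̂_m > 0 satisfy ‖∂_rF(r̃_n, k_n)x‖ ≥ σ̂_m‖x‖ for all x ∈ X and all n with n_{m−1} ≤ n ≤ n_m. Let α₁ ≥ α₂ ≥ … ≥ α_M ≥ α > 0 be regularization parameters with α_m ≤ εσ̂_m²/(3 − ε) for each m, and assume the step-size and noise conditions at the smallest parameter: (9d₁d₄/(4α))Δk ≤ ε/3, Δk(d₀ + d₂/(2√α)) ≤ (1/2)(1 − b)d₀c₀(α)α, and δ̃/(2√α) ≤ (1/2)(1 − b)d₀c₀(α)α. Run the Newton iteration with J inner iterations per frequency, using the regularization parameter α_m at every frequency of the m-th sub-interval: r⁰_{n+1} := r_n, r^{j+1}_{n+1} := r^j_{n+1} − P_{n+1} R_{α_m}(∂_rF(r^j_{n+1}, k_{n+1})) (F(r^j_{n+1}, k_{n+1}) + f_{n+1}) for n_{m−1} ≤ n < n_m, j = 0,…,J−1, and r_{n+1} := r^J_{n+1}. Then there exists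 a positive integer J₀ such that for every J ≥ J₀, if the starting approximation r₀ ∈ X₀ satisfies ‖r̃₀ − r₀‖ ≤ d₀c₀(α₁)α₁, then ‖r̃_{n_m} − r_{n_m}‖ ≤ d₀c₀(α_{m+1})α_{m+1} for every m = 1,…,M−1, and the final error satisfies ‖r̃_N − r_N‖ ≤ [δ̃/(2√α_M(1 − q)) + q^{J−1} Δk (d₀ + d₂/(2√α_M))] / (1 − q^{J−1}b) + (q^{J−1}b)^{N − n_{M−1}} · d₀c₀(α_M)α_M. -/
set_option linter.unusedSectionVars false
set_option maxHeartbeats 1600000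

open scoped RealInnerProductSpace

section MlvlAux

variable {X Y : Type*}
  [NormedAddCommGroup X] [InnerProductSpace ℝ X] [CompleteSpace X]
  [NormedAddCommGroup Y] [InnerProductSpace ℝ Y] [CompleteSpace Y]

lemma mlvl_proj_norm_le (S : Submodule ℝ X) (P : X →L[ℝ] X)
    (hP : ∀ x : X, P x ∈ S ∧ x - P x ∈ Sᗮ) (x : X) : ‖P x‖ ≤ ‖x‖ := by
  have horth : ⟪P x, x - P x⟫ = 0 :=
    (Submodule.mem_orthogonal S (x - P x)).mp (hP x).2 (P x) (hP x).1
  have hx : x = P x + (x - P x) := by abel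
  have hsq : ‖x‖ ^ 2 = ‖P x‖ ^ 2 + ‖x - P x‖ ^ 2 := by
    calc ‖x‖ ^ 2 = ‖P x + (x - P x)‖ ^ 2 := by rw [← hx]
    _ = ‖P x‖ ^ 2 + 2 * ⟪P x, x - P x⟫ + ‖x - P x‖ ^ 2 := by
        rw [← norm_add_sq_real]
    _ = ‖P x‖ ^ 2 + ‖x - P x‖ ^ 2 := by rw [horth]; ring
  nlinarith [norm_nonneg (P x), norm_nonneg x, norm_nonneg (x - P x)]

lemma mlvl_proj_fix (S : Submodule ℝ X) (P : X →L[ℝ] X)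
    (hP : ∀ x : X, P x ∈ S ∧ x - P x ∈ Sᗮ) (x : X) (hx : x ∈ S) : P x = x := by
  have h1 : x - P x ∈ S := Submodule.sub_mem S hx (hP x).1
  have h2 : ⟪x - P x, x - P x⟫ = 0 :=
    (Submodule.mem_orthogonal S (x - P x)).mp (hP x).2 (x - P x) h1
  have h3 : x - P x = 0 := inner_self_eq_zero.mp h2
  have := sub_eq_zero.mp h3
  exact this.symm

lemma mlvl_B_energy (A : X →L[ℝ] Y) (B : X →L[ℝ] X) (β : ℝ)
    (hB : (β • (1 : X →L[ℝ] X) + ContinuousLinearMap.adjoint A ∘L A) ∘L B = 1)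
    (y : X) : β * ‖B y‖ ^ 2 + ‖A (B y)‖ ^ 2 = ⟪y, B y⟫ := by
  have happ : β • (B y) + ContinuousLinearMap.adjoint A (A (B y)) = y := by
    have := congrArg (fun (T : X →L[ℝ] X) => T y) hB
    simpa using this
  have key : ⟪β • (B y) + ContinuousLinearMap.adjoint A (A (B y)), B y⟫ = ⟪y, B y⟫ := by
    rw [happ]
  rw [inner_add_left, real_inner_smul_left,
    ContinuousLinearMap.adjoint_inner_left, real_inner_self_eq_norm_sq] at key
  rw [← key, real_inner_self_eq_norm_sq]

lemma mlvl_BAstar_bound (A : X →L[ℝ] Y) (B : X →L[ℝ] X) (β : ℝ) (hβ : 0 < β)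
    (hB : (β • (1 : X →L[ℝ] X) + ContinuousLinearMap.adjoint A ∘L A) ∘L B = 1)
    (y : Y) : ‖B (ContinuousLinearMap.adjoint A y)‖ ≤ ‖y‖ / (2 * Real.sqrt β) := by
  set x := B (ContinuousLinearMap.adjoint A y) with hx
  have he := mlvl_B_energy A B β hB (ContinuousLinearMap.adjoint A y)
  rw [← hx] at he
  have hinner : ⟪ContinuousLinearMap.adjoint A y, x⟫ = ⟪y, A x⟫ :=
    ContinuousLinearMap.adjoint_inner_left A x y
  rw [hinner] at he
  have hle : ⟪y, A x⟫ ≤ ‖y‖ * ‖A x‖ := real_inner_le_norm y (A x)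
  have h3 : β * ‖x‖ ^ 2 ≤ ‖y‖ ^ 2 / 4 := by
    nlinarith [sq_nonneg (‖A x‖ - ‖y‖ / 2)]
  have hsq : ‖x‖ ^ 2 ≤ ‖y‖ ^ 2 / (4 * β) := by
    rw [le_div_iff₀ (by positivity)]; nlinarith
  have h2 : (‖y‖ / (2 * Real.sqrt β)) ^ 2 = ‖y‖ ^ 2 / (4 * β) := by
    rw [div_pow, mul_pow, Real.sq_sqrt hβ.le]; norm_num
  have h4 : ‖x‖ ^ 2 ≤ (‖y‖ / (2 * Real.sqrt β)) ^ 2 := by rw [h2]; exact hsq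
  have h5 := Real.sqrt_le_sqrt h4
  rwa [Real.sqrt_sq (norm_nonneg x), Real.sqrt_sq (by positivity)] at h5

lemma mlvl_B_bound (A : X →L[ℝ] Y) (B : X →L[ℝ] X) (β s : ℝ) (hβ : 0 < β) (hs : 0 ≤ s)
    (hlow : ∀ x : X, s * ‖x‖ ≤ ‖A x‖)
    (hB : (β • (1 : X →L[ℝ] X) + ContinuousLinearMap.adjoint A ∘L A) ∘L B = 1)
    (y : X) : ‖B y‖ ≤ ‖y‖ / (β + s ^ 2) := by
  set x := B y with hx
  have he := mlvl_B_energy A B β hB y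
  rw [← hx] at he
  have hle : ⟪y, x⟫ ≤ ‖y‖ * ‖x‖ := real_inner_le_norm y x
  have hAx := hlow x
  have hsq2 : (s * ‖x‖) ^ 2 ≤ ‖A x‖ ^ 2 :=
    pow_le_pow_left₀ (by positivity) hAx 2
  have h1 : (β + s ^ 2) * ‖x‖ ^ 2 ≤ ‖y‖ * ‖x‖ := by nlinarith
  rcases eq_or_lt_of_le (norm_nonneg x) with h0 | h0
  · rw [← h0]; positivity
  · rw [div_eq_inv_mul, ← mul_le_mul_iff_of_pos_right h0]
    calc ‖x‖ * ‖x‖ = ‖x‖ ^ 2 := by ring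
    _ ≤ (β + s ^ 2)⁻¹ * (‖y‖ * ‖x‖) := by
        rw [le_inv_mul_iff₀ (by positivity)]; nlinarith
    _ = (β + s ^ 2)⁻¹ * ‖y‖ * ‖x‖ := by ring

lemma mlvl_Bid (A : X →L[ℝ] Y) (B : X →L[ℝ] X) (β : ℝ)
    (hB : B ∘L (β • (1 : X →L[ℝ] X) + ContinuousLinearMap.adjoint A ∘L A) = 1)
    (e : X) : e - B (ContinuousLinearMap.adjoint A (A e)) = β • B e := by
  have happ : β • B e + B (ContinuousLinearMap.adjoint A (A e)) = e := by
    have := congrArg (fun (T : X →L[ℝ] X) => T e) hB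
    simpa using this
  have h2 : B (ContinuousLinearMap.adjoint A (A e)) = e - β • B e :=
    eq_sub_of_add_eq' happ
  rw [h2]; abel

lemma mlvl_partial_contDiff (F : X × ℝ → Y) (hF : ContDiff ℝ 2 F) (κ : ℝ) :
    ContDiff ℝ 2 (fun r : X => F (r, κ)) :=
  hF.comp (contDiff_id.prodMk contDiff_const)

lemma mlvl_DF_lip (F : X × ℝ → Y) (hF : ContDiff ℝ 2 F) (d₃ : ℝ)
    (hFrr : ∀ (r : X) (κ : ℝ),
      ‖fderiv ℝ (fun r' => fderiv ℝ (fun r'' => F (r'', κ)) r') r‖ ≤ d₃)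
    (κ : ℝ) (x y : X) :
    ‖fderiv ℝ (fun r => F (r, κ)) y - fderiv ℝ (fun r => F (r, κ)) x‖ ≤ d₃ * ‖y - x‖ := by
  have hG : ContDiff ℝ 1 (fderiv ℝ (fun r : X => F (r, κ))) := by
    have := mlvl_partial_contDiff F hF κ
    exact this.fderiv_right (le_refl _)
  exact Convex.norm_image_sub_le_of_norm_fderiv_le
    (fun z _ => (hG.differentiable one_ne_zero).differentiableAt)
    (fun z _ => hFrr z κ) convex_univ (Set.mem_univ x) (Set.mem_univ y)

lemma mlvl_taylor (F : X × ℝ → Y) (hF : ContDiff ℝ 2 F) (d₃ : ℝ)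
    (hFrr : ∀ (r : X) (κ : ℝ),
      ‖fderiv ℝ (fun r' => fderiv ℝ (fun r'' => F (r'', κ)) r') r‖ ≤ d₃)
    (κ : ℝ) (x y : X) :
    ‖F (y, κ) - F (x, κ) - (fderiv ℝ (fun r => F (r, κ)) x) (y - x)‖
      ≤ d₃ * ‖y - x‖ * ‖y - x‖ := by
  set Fκ := fun r : X => F (r, κ) with hFκ
  have hC : ContDiff ℝ 2 Fκ := mlvl_partial_contDiff F hF κ
  set D := fderiv ℝ Fκ with hD
  set H := fun r : X => Fκ r - (D x) r with hH
  have hHderiv : ∀ z : X, HasFDerivAt H (D z - D x) z := by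
    intro z
    exact ((hC.differentiable (by norm_num)).differentiableAt.hasFDerivAt).sub
      ((D x).hasFDerivAt)
  have hseg : ∀ z ∈ segment ℝ x y, ‖D z - D x‖ ≤ d₃ * ‖y - x‖ := by
    intro z hz
    rcases hz with ⟨a, b, ha, hb, hab, rfl⟩
    have hzx : (a • x + b • y) - x = b • (y - x) := by
      have : a = 1 - b := by linarith
      rw [this]; module
    have h1 : ‖D (a • x + b • y) - D x‖ ≤ d₃ * ‖(a • x + b • y) - x‖ :=
      mlvl_DF_lip F hF d₃ hFrr κ x _
    have h2 : ‖(a • x + b • y) - x‖ = b * ‖y - x‖ := by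
      rw [hzx, norm_smul, Real.norm_eq_abs, abs_of_nonneg hb]
    have hd₃ : 0 ≤ d₃ := le_trans (norm_nonneg (fderiv ℝ (fun r' => fderiv ℝ (fun r'' => F (r'', κ)) r') x : X →L[ℝ] X →L[ℝ] Y)) (hFrr x κ)
    calc ‖D (a • x + b • y) - D x‖ ≤ d₃ * (b * ‖y - x‖) := by rw [← h2]; exact h1
    _ ≤ d₃ * ‖y - x‖ := by nlinarith [mul_nonneg hd₃ (norm_nonneg (y - x))]
  have hmv := Convex.norm_image_sub_le_of_norm_hasFDerivWithin_le
    (f := H) (f' := fun z => D z - D x) (C := d₃ * ‖y - x‖)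
    (fun z hz => (hHderiv z).hasFDerivWithinAt)
    hseg (convex_segment x y) (left_mem_segment ℝ x y) (right_mem_segment ℝ x y)
  have hHy : H y - H x = F (y, κ) - F (x, κ) - (D x) (y - x) := by
    simp only [hH, hFκ]
    rw [map_sub]; abel
  rw [hHy] at hmv
  calc ‖F (y, κ) - F (x, κ) - (D x) (y - x)‖ ≤ d₃ * ‖y - x‖ * ‖y - x‖ := hmv

/-- One projected regularized Newton step. -/
lemma mlvl_step (F : X × ℝ → Y) (hF : ContDiff ℝ 2 F) (d₃ : ℝ)
    (hFrr : ∀ (r : X) (κ : ℝ),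
      ‖fderiv ℝ (fun r' => fderiv ℝ (fun r'' => F (r'', κ)) r') r‖ ≤ d₃)
    (κ : ℝ) (β σ : ℝ) (hβ : 0 < β)
    (S : Submodule ℝ X) (P : X →L[ℝ] X)
    (hP : ∀ x : X, P x ∈ S ∧ x - P x ∈ Sᗮ)
    (A : X →L[ℝ] Y) (B : X →L[ℝ] X)
    (rtn w : X) (fn : Y)
    (hA : A = fderiv ℝ (fun r' => F (r', κ)) w)
    (hB1 : B ∘L (β • (1 : X →L[ℝ] X) + ContinuousLinearMap.adjoint A ∘L A) = 1)
    (hB2 : (β • (1 : X →L[ℝ] X) + ContinuousLinearMap.adjoint A ∘L A) ∘L B = 1)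
    (hrt : rtn ∈ S) (hw : w ∈ S)
    (hFz : F (rtn, κ) = 0)
    (hσ : ∀ x : X, σ * ‖x‖ ≤ ‖fderiv ℝ (fun r' => F (r', κ)) rtn x‖)
    (hs0 : 0 ≤ σ - d₃ * ‖rtn - w‖) :
    ‖rtn - (w - P ((B ∘L ContinuousLinearMap.adjoint A) (F (w, κ) + fn)))‖ ≤
      β / (β + (σ - d₃ * ‖rtn - w‖) ^ 2) * ‖rtn - w‖
        + d₃ * ‖rtn - w‖ ^ 2 / (2 * Real.sqrt β)
        + ‖fn‖ / (2 * Real.sqrt β) := by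
  set e : X := rtn - w with hedef
  set R : Y := F (rtn, κ) - F (w, κ) - A e with hRdef
  have hRnorm : ‖R‖ ≤ d₃ * ‖e‖ * ‖e‖ := by
    rw [hRdef, hA, hedef]
    exact mlvl_taylor F hF d₃ hFrr κ w rtn
  -- lower bound for A
  have hlowA : ∀ x : X, (σ - d₃ * ‖e‖) * ‖x‖ ≤ ‖A x‖ := by
    intro x
    have ha := hσ x
    have h2 : ‖fderiv ℝ (fun r' => F (r', κ)) rtn x - A x‖ ≤ d₃ * ‖e‖ * ‖x‖ := by
      rw [hA]
      calc ‖fderiv ℝ (fun r' => F (r', κ)) rtn x - fderiv ℝ (fun r' => F (r', κ)) w x‖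
          = ‖(fderiv ℝ (fun r' => F (r', κ)) rtn - fderiv ℝ (fun r' => F (r', κ)) w) x‖ := by
            simp [ContinuousLinearMap.sub_apply]
      _ ≤ ‖fderiv ℝ (fun r' => F (r', κ)) rtn - fderiv ℝ (fun r' => F (r', κ)) w‖ * ‖x‖ :=
            ContinuousLinearMap.le_opNorm _ x
      _ ≤ d₃ * ‖rtn - w‖ * ‖x‖ := by
            have := mlvl_DF_lip F hF d₃ hFrr κ w rtn
            exact mul_le_mul_of_nonneg_right this (norm_nonneg x)
    have h3 : ‖fderiv ℝ (fun r' => F (r', κ)) rtn x‖ - ‖A x‖ ≤ d₃ * ‖e‖ * ‖x‖ := by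
      rw [hedef]
      exact le_trans (norm_sub_norm_le _ _) h2
    nlinarith [norm_nonneg x]
  -- the algebraic identity
  have hFw : F (w, κ) = -(A e) - R := by rw [hRdef, hFz]; abel
  have hPe : P e = e := mlvl_proj_fix S P hP e (Submodule.sub_mem S hrt hw)
  have hiter : rtn - (w - P ((B ∘L ContinuousLinearMap.adjoint A) (F (w, κ) + fn)))
      = P (β • B e - B (ContinuousLinearMap.adjoint A R)
          + B (ContinuousLinearMap.adjoint A fn)) := by
    have hkey : e + (B ∘L ContinuousLinearMap.adjoint A) (F (w, κ) + fn)
        = β • B e - B (ContinuousLinearMap.adjoint A R)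
          + B (ContinuousLinearMap.adjoint A fn) := by
      have h4 := mlvl_Bid A B β hB1 e
      rw [hFw]
      simp only [ContinuousLinearMap.comp_apply, map_add, map_sub, map_neg]
      rw [← h4]
      abel
    have h1 : rtn - (w - P ((B ∘L ContinuousLinearMap.adjoint A) (F (w, κ) + fn)))
        = P e + P ((B ∘L ContinuousLinearMap.adjoint A) (F (w, κ) + fn)) := by
      rw [hPe]; rw [hedef]; abel
    rw [h1, ← map_add, hkey]
  rw [hiter]
  have hsqrt : 0 < Real.sqrt β := Real.sqrt_pos.mpr hβ
  calc ‖P (β • B e - B (ContinuousLinearMap.adjoint A R)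
          + B (ContinuousLinearMap.adjoint A fn))‖
      ≤ ‖β • B e - B (ContinuousLinearMap.adjoint A R)
          + B (ContinuousLinearMap.adjoint A fn)‖ := mlvl_proj_norm_le S P hP _
    _ ≤ ‖β • B e‖ + ‖B (ContinuousLinearMap.adjoint A R)‖
          + ‖B (ContinuousLinearMap.adjoint A fn)‖ := by
        refine le_trans (norm_add_le _ _) ?_
        have := norm_sub_le (β • B e) (B (ContinuousLinearMap.adjoint A R))
        linarith
    _ ≤ β / (β + (σ - d₃ * ‖e‖) ^ 2) * ‖e‖ + d₃ * ‖e‖ ^ 2 / (2 * Real.sqrt β)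
          + ‖fn‖ / (2 * Real.sqrt β) := by
        have hb1 : ‖β • B e‖ ≤ β / (β + (σ - d₃ * ‖e‖) ^ 2) * ‖e‖ := by
          rw [norm_smul, Real.norm_eq_abs, abs_of_pos hβ]
          have := mlvl_B_bound A B β (σ - d₃ * ‖e‖) hβ hs0 hlowA hB2 e
          calc β * ‖B e‖ ≤ β * (‖e‖ / (β + (σ - d₃ * ‖e‖) ^ 2)) :=
              mul_le_mul_of_nonneg_left this hβ.le
          _ = β / (β + (σ - d₃ * ‖e‖) ^ 2) * ‖e‖ := by ring
        have hb2 : ‖B (ContinuousLinearMap.adjoint A R)‖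
            ≤ d₃ * ‖e‖ ^ 2 / (2 * Real.sqrt β) := by
          have h := mlvl_BAstar_bound A B β hβ hB2 R
          have hR2 : ‖R‖ ≤ d₃ * ‖e‖ ^ 2 := by nlinarith
          calc ‖B (ContinuousLinearMap.adjoint A R)‖ ≤ ‖R‖ / (2 * Real.sqrt β) := h
          _ ≤ d₃ * ‖e‖ ^ 2 / (2 * Real.sqrt β) := by gcongr
        have hb3 : ‖B (ContinuousLinearMap.adjoint A fn)‖ ≤ ‖fn‖ / (2 * Real.sqrt β) :=
          mlvl_BAstar_bound A B β hβ hB2 fn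
        linarith

end MlvlAux

set_option maxHeartbeats 1000000 in
lemma mlvl_contraction (ε d₀ d₁ d₃ β σ e : ℝ)
    (hε0 : 0 < ε) (hεd : ε * (2 + d₀) < 3) (hd₀ : 1 ≤ d₀) (hd₁ : 0 < d₁) (hd₃ : 0 < d₃)
    (hβ : 0 < β) (hσ : 0 < σ) (hσd : σ ≤ d₁) (hβσ : (3 - ε) * β ≤ ε * σ ^ 2)
    (he : 0 ≤ e)
    (heE : e ≤ 3 / 2 * (d₀ * (4 * ε / (3 * d₃ * (9 * d₁ + Real.sqrt β))) * β)) :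
    d₃ * e < σ ∧
      β / (β + (σ - d₃ * e) ^ 2) + d₃ * e / (2 * Real.sqrt β) ≤ ε * (1 + d₀) / 3 := by
  set γ := Real.sqrt β with hγdef
  have hγ : 0 < γ := Real.sqrt_pos.mpr hβ
  have hγ2 : γ ^ 2 = β := Real.sq_sqrt hβ.le
  have hd₀' : 0 < d₀ := lt_of_lt_of_le zero_lt_one hd₀
  have hε1 : ε < 1 := by nlinarith
  set t := ε * d₀ with htdef
  have ht0 : 0 < t := by positivity
  have ht3 : t < 3 - 2 * ε := by nlinarith
  have h3ε : 0 < 3 - ε := by linarith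
  have hβd : β ≤ d₁ ^ 2 := by nlinarith
  have hγd : γ ≤ d₁ := by
    have := Real.sqrt_le_sqrt hβd
    rwa [Real.sqrt_sq hd₁.le] at this
  set u := d₃ * e with hudef
  have hu0 : 0 ≤ u := by positivity
  have hdenpos : 0 < 3 * d₃ * (9 * d₁ + γ) := by positivity
  have hu : u ≤ t * γ / 5 := by
    have h1 : u ≤ d₃ * (3 / 2 * (d₀ * (4 * ε / (3 * d₃ * (9 * d₁ + γ))) * β)) := by
      rw [hudef]; exact mul_le_mul_of_nonneg_left heE hd₃.le
    have h2 : d₃ * (3 / 2 * (d₀ * (4 * ε / (3 * d₃ * (9 * d₁ + γ))) * β))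
        = 2 * t * β / (9 * d₁ + γ) := by
      field_simp
      ring
    rw [h2] at h1
    have h3 : 2 * t * β / (9 * d₁ + γ) ≤ t * γ / 5 := by
      rw [div_le_div_iff₀ (by positivity) (by norm_num)]
      nlinarith [mul_pos ht0 hγ]
    linarith
  have hγσ : 2 * γ ^ 2 < σ ^ 2 := by nlinarith
  have hγσ' : γ < σ := by nlinarith
  have ht3' : t < 3 := by linarith
  have hu3 : u ≤ 3 * γ / 5 := by nlinarith [mul_lt_mul_of_pos_right ht3' hγ]
  have huσ : u < σ := by nlinarith
  refine ⟨huσ, ?_⟩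
  have hks : u / (2 * γ) ≤ t / 10 := by
    rw [div_le_div_iff₀ (by positivity) (by norm_num)]
    nlinarith
  have hden : 0 < β + (σ - u) ^ 2 := by positivity
  have hc1 : 0 ≤ 3 - ε - 3 * t / 5 := by nlinarith
  have hgs : (3 - ε) * γ ≤ 3 / 2 * σ := by
    nlinarith [sq_nonneg ((3 - ε) * γ - 3 / 2 * σ), sq_nonneg (3 / 2 - ε), mul_pos h3ε hγ]
  have h5 : 2 * (3 - ε) * u * σ ≤ 3 * t / 5 * σ ^ 2 := by
    have : 2 * (3 - ε) * u * σ ≤ 2 * (t * γ / 5) * ((3 - ε) * σ) := by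
      nlinarith [mul_pos h3ε hσ]
    nlinarith [mul_le_mul_of_nonneg_right hgs hσ.le, mul_pos ht0 hσ]
  have hAB : (3 - ε) * β * (3 - 3 * t / 5) ≤ ε * (3 - ε) * (β + (σ - u) ^ 2) := by
    have hB' : (3 - ε) * β * (3 - ε - 3 * t / 5) ≤ ε * σ ^ 2 * (3 - ε - 3 * t / 5) :=
      mul_le_mul_of_nonneg_right hβσ hc1
    nlinarith [mul_le_mul_of_nonneg_left h5 hε0.le,
      mul_nonneg (mul_nonneg hε0.le h3ε.le) (sq_nonneg u)]
  have hC : 30 * ε ≤ (10 * ε + 7 * t) * (3 - 3 * t / 5) := by nlinarith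
  have h10 : 0 < 10 * ε + 7 * t := by positivity
  have hfin : 30 * β ≤ (10 * ε + 7 * t) * (β + (σ - u) ^ 2) := by
    have hbig : ε * (3 - ε) * (30 * β)
        ≤ ε * (3 - ε) * ((10 * ε + 7 * t) * (β + (σ - u) ^ 2)) := by
      calc ε * (3 - ε) * (30 * β) = (3 - ε) * β * (30 * ε) := by ring
      _ ≤ (3 - ε) * β * ((10 * ε + 7 * t) * (3 - 3 * t / 5)) :=
          mul_le_mul_of_nonneg_left hC (by positivity)
      _ = (10 * ε + 7 * t) * ((3 - ε) * β * (3 - 3 * t / 5)) := by ring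
      _ ≤ (10 * ε + 7 * t) * (ε * (3 - ε) * (β + (σ - u) ^ 2)) :=
          mul_le_mul_of_nonneg_left hAB h10.le
      _ = ε * (3 - ε) * ((10 * ε + 7 * t) * (β + (σ - u) ^ 2)) := by ring
    exact le_of_mul_le_mul_left hbig (by positivity)
  have hkey : β / (β + (σ - u) ^ 2) ≤ (10 * ε + 7 * t) / 30 := by
    rw [div_le_div_iff₀ hden (by norm_num)]
    linarith
  have : (10 * ε + 7 * t) / 30 + t / 10 = ε * (1 + d₀) / 3 := by
    rw [htdef]; ring
  linarith


lemma mlvl_gmono (ε d₀ d₁ d₃ a c : ℝ) (hε0 : 0 < ε) (hd₀ : 0 < d₀) (hd₁ : 0 < d₁)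
    (hd₃ : 0 < d₃) (ha : 0 < a) (hac : a ≤ c) :
    d₀ * (4 * ε / (3 * d₃ * (9 * d₁ + Real.sqrt a))) * a
      ≤ d₀ * (4 * ε / (3 * d₃ * (9 * d₁ + Real.sqrt c))) * c := by
  have hsa := Real.sqrt_nonneg a
  have hsc := Real.sqrt_nonneg c
  have hsle : Real.sqrt a ≤ Real.sqrt c := Real.sqrt_le_sqrt hac
  have ha2 : Real.sqrt a ^ 2 = a := Real.sq_sqrt ha.le
  have hc2 : Real.sqrt c ^ 2 = c := Real.sq_sqrt (le_trans ha.le hac)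
  have h1 : a * (9 * d₁ + Real.sqrt c) ≤ c * (9 * d₁ + Real.sqrt a) := by
    nlinarith [mul_nonneg hsa hsc]
  have ea : d₀ * (4 * ε / (3 * d₃ * (9 * d₁ + Real.sqrt a))) * a
      = 4 * ε * d₀ * a / (3 * d₃ * (9 * d₁ + Real.sqrt a)) := by ring
  have ec : d₀ * (4 * ε / (3 * d₃ * (9 * d₁ + Real.sqrt c))) * c
      = 4 * ε * d₀ * c / (3 * d₃ * (9 * d₁ + Real.sqrt c)) := by ring
  rw [ea, ec, div_le_div_iff₀ (by positivity) (by positivity)]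
  nlinarith [mul_le_mul_of_nonneg_left h1 (by positivity : (0:ℝ) ≤ 12 * ε * d₀ * d₃)]

/-- Convergence of the multi-level projected Newton method (Theorem 3.1, explicit
form). The `m`-th frequency sub-interval consists of the indices `nseq (m-1), …, nseq m`
and uses the regularization parameter `αs m`; `c₀(β) = 4ε/(3 d₃ (9 d₁ + √β))`. -/
theorem stmt_17 {X Y : Type*}
    [NormedAddCommGroup X] [InnerProductSpace ℝ X] [CompleteSpace X]
    [NormedAddCommGroup Y] [InnerProductSpace ℝ Y] [CompleteSpace Y]
    (N M : ℕ) (hN : 1 ≤ N) (hM : 1 ≤ M)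
    (kl Δk : ℝ) (hΔk : 0 < Δk)
    (k : ℕ → ℝ) (hk : ∀ n : ℕ, k n = kl + n * Δk)
    (Xs : ℕ → Submodule ℝ X)
    (hXsclosed : ∀ n, n ≤ N → IsClosed ((Xs n : Set X)))
    (hXsmono : ∀ n, n < N → Xs n ≤ Xs (n + 1))
    (P : ℕ → X →L[ℝ] X)
    (hP : ∀ n, n ≤ N → ∀ x : X, P n x ∈ Xs n ∧ x - P n x ∈ (Xs n)ᗮ)
    (F : X × ℝ → Y) (hF : ContDiff ℝ 2 F)
    (d₀ d₁ d₂ d₃ d₄ : ℝ) (hd₀ : 1 ≤ d₀) (hd₁ : 0 < d₁) (hd₂ : 0 < d₂)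
    (hd₃ : 0 < d₃) (hd₄ : 0 < d₄)
    (hFr : ∀ (r : X) (κ : ℝ), ‖fderiv ℝ (fun r' => F (r', κ)) r‖ ≤ d₁)
    (hFk : ∀ (r : X) (κ : ℝ), ‖deriv (fun κ' => F (r, κ')) κ‖ ≤ d₂)
    (hFrr : ∀ (r : X) (κ : ℝ),
      ‖fderiv ℝ (fun r' => fderiv ℝ (fun r'' => F (r'', κ)) r') r‖ ≤ d₃)
    (hFkr : ∀ (r : X) (κ : ℝ),
      ‖deriv (fun κ' => fderiv ℝ (fun r' => F (r', κ')) r) κ‖ ≤ d₄)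
    (rt : ℕ → X)
    (hrtmem : ∀ n, n ≤ N → rt n ∈ Xs n)
    (hrtzero : ∀ n, n ≤ N → F (rt n, k n) = 0)
    (hrtstep : ∀ n, n < N → ‖rt (n + 1) - rt n‖ ≤ d₀ * Δk)
    (δt : ℝ) (hδt : 0 ≤ δt)
    (f : ℕ → Y) (hf : ∀ n, 1 ≤ n → n ≤ N → ‖f n‖ ≤ δt)
    (ε : ℝ) (hε0 : 0 < ε) (hε1 : ε < 3 / (2 + d₀))
    (q b : ℝ) (hqdef : q = ε * (1 + d₀) / 3) (hbdef : b = ε * (2 + d₀) / 3)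
    (c₀ : ℝ → ℝ) (hc₀ : ∀ β : ℝ, c₀ β = 4 * ε / (3 * d₃ * (9 * d₁ + Real.sqrt β)))
    -- the partition of the frequency indices into `M` sub-intervals
    (nseq : ℕ → ℕ) (hnseq0 : nseq 0 = 0) (hnseqM : nseq M = N)
    (hnseqmono : ∀ m, m < M → nseq m < nseq (m + 1))
    -- lower bounds of the singular values on each sub-interval
    (σh : ℕ → ℝ) (hσh : ∀ m, 1 ≤ m → m ≤ M → 0 < σh m)
    (hlow : ∀ m, 1 ≤ m → m ≤ M → ∀ n, nseq (m - 1) ≤ n → n ≤ nseq m → ∀ x : X,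
      σh m * ‖x‖ ≤ ‖fderiv ℝ (fun r' => F (r', k n)) (rt n) x‖)
    -- the regularization parameters
    (αs : ℕ → ℝ) (α : ℝ) (hα : 0 < α) (hααsM : α ≤ αs M)
    (hαsmono : ∀ m, 1 ≤ m → m < M → αs (m + 1) ≤ αs m)
    (hαsle : ∀ m, 1 ≤ m → m ≤ M → αs m ≤ ε * σh m ^ 2 / (3 - ε))
    -- step-size and noise conditions at the smallest parameter
    (hstep1 : 9 * d₁ * d₄ / (4 * α) * Δk ≤ ε / 3)
    (hstep2 : Δk * (d₀ + d₂ / (2 * Real.sqrt α)) ≤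
      1 / 2 * (1 - b) * d₀ * c₀ α * α)
    (hstep3 : δt / (2 * Real.sqrt α) ≤ 1 / 2 * (1 - b) * d₀ * c₀ α * α) :
    ∃ J₀ : ℕ, 0 < J₀ ∧ ∀ J : ℕ, J₀ ≤ J →
      ∀ (r : ℕ → X) (rr : ℕ → ℕ → X)
        (A : ℕ → ℕ → X →L[ℝ] Y) (B : ℕ → ℕ → X →L[ℝ] X),
      (∀ n, n < N → ∀ j, j < J →
        A n j = fderiv ℝ (fun r' => F (r', k (n + 1))) (rr n j)) →
      (∀ m, 1 ≤ m → m ≤ M → ∀ n, nseq (m - 1) ≤ n → n < nseq m → ∀ j, j < J →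
        B n j ∘L (αs m • (1 : X →L[ℝ] X) +
          ContinuousLinearMap.adjoint (A n j) ∘L A n j) = 1 ∧
        (αs m • (1 : X →L[ℝ] X) +
          ContinuousLinearMap.adjoint (A n j) ∘L A n j) ∘L B n j = 1) →
      (∀ n, n < N → rr n 0 = r n) →
      (∀ m, 1 ≤ m → m ≤ M → ∀ n, nseq (m - 1) ≤ n → n < nseq m → ∀ j, j < J →
        rr n (j + 1) = rr n j - P (n + 1)
          ((B n j ∘L ContinuousLinearMap.adjoint (A n j))
            (F (rr n j, k (n + 1)) + f (n + 1)))) →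
      (∀ n, n < N → r (n + 1) = rr n J) →
      r 0 ∈ Xs 0 →
      ‖rt 0 - r 0‖ ≤ d₀ * c₀ (αs 1) * αs 1 →
      (∀ m, 1 ≤ m → m ≤ M - 1 →
        ‖rt (nseq m) - r (nseq m)‖ ≤ d₀ * c₀ (αs (m + 1)) * αs (m + 1)) ∧
      ‖rt N - r N‖ ≤
        (δt / (2 * Real.sqrt (αs M) * (1 - q)) +
          q ^ (J - 1) * Δk * (d₀ + d₂ / (2 * Real.sqrt (αs M)))) /
          (1 - q ^ (J - 1) * b) +
        (q ^ (J - 1) * b) ^ (N - nseq (M - 1)) * (d₀ * c₀ (αs M) * αs M) := by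
  classical
  have h2d₀ : (0:ℝ) < 2 + d₀ := by linarith
  have hεd : ε * (2 + d₀) < 3 := by
    have h := (lt_div_iff₀ h2d₀).mp hε1
    linarith
  have hε1' : ε < 1 := by
    have hεd₀ := mul_le_mul_of_nonneg_left hd₀ hε0.le
    linarith
  have hq0 : 0 ≤ q := by rw [hqdef]; positivity
  have hqb : q ≤ b := by
    rw [hqdef, hbdef]
    have : ε * (1 + d₀) ≤ ε * (2 + d₀) := by linarith
    linarith
  have hb1 : b < 1 := by rw [hbdef]; linarith
  have hq1 : q < 1 := lt_of_le_of_lt hqb hb1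
  have hb0 : 0 < b := by rw [hbdef]; positivity
  have h1q : 0 < 1 - q := by linarith
  have h1b : 0 ≤ 1 - b := by linarith
  have h1b1q : 1 - b ≤ 1 - q := by linarith
  have hd₀0 : (0:ℝ) < d₀ := by linarith
  have hd₀0' : (0:ℝ) < d₀ := hd₀0
  have h3ε : (0:ℝ) < 3 - ε := by linarith
  -- αs chain
  have hchain : ∀ i m, 1 ≤ m → m + i ≤ M → αs (m + i) ≤ αs m := by
    intro i
    induction i with
    | zero => intro m _ _; simp
    | succ i ih =>
      intro m h1 h2
      have h4 : αs (m + 1) ≤ αs m := hαsmono m h1 (by omega)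
      have h3 : αs (m + 1 + i) ≤ αs (m + 1) := ih (m + 1) (by omega) (by omega)
      have heq : m + (i + 1) = m + 1 + i := by omega
      rw [heq]
      exact le_trans h3 h4
  have hαsge : ∀ m, 1 ≤ m → m ≤ M → α ≤ αs m := by
    intro m h1 h2
    have h := hchain (M - m) m h1 (by omega)
    rw [show m + (M - m) = M from by omega] at h
    linarith [hααsM]
  have hαsle1 : ∀ m, 1 ≤ m → m ≤ M → αs m ≤ αs 1 := by
    intro m h1 h2
    have h := hchain (m - 1) 1 le_rfl (by omega)
    rwa [show 1 + (m - 1) = m from by omega] at h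
  have hαspos : ∀ m, 1 ≤ m → m ≤ M → 0 < αs m := fun m h1 h2 =>
    lt_of_lt_of_le hα (hαsge m h1 h2)
  -- nseq monotone
  have hnchain : ∀ i m, m + i ≤ M → nseq m ≤ nseq (m + i) := by
    intro i
    induction i with
    | zero => intro m _; simp
    | succ i ih =>
      intro m h
      have h1 : nseq m ≤ nseq (m + i) := ih m (by omega)
      have h2 : nseq (m + i) < nseq (m + i + 1) := hnseqmono (m + i) (by omega)
      have heq : m + (i + 1) = m + i + 1 := by omega
      rw [heq]; omega
  have hnseqle : ∀ m m', m ≤ m' → m' ≤ M → nseq m ≤ nseq m' := by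
    intro m m' h h'
    have := hnchain (m' - m) m (by omega)
    rwa [show m + (m' - m) = m' from by omega] at this
  have hnseqleN : ∀ m, m ≤ M → nseq m ≤ N := by
    intro m hm
    have := hnseqle m M hm le_rfl
    omega
  -- g positivity & monotonicity
  have hgpos : ∀ a : ℝ, 0 < a → 0 < d₀ * c₀ a * a := by
    intro a ha
    rw [hc₀ a]
    have := Real.sqrt_nonneg a
    positivity
  have hgm : ∀ a c : ℝ, 0 < a → a ≤ c → d₀ * c₀ a * a ≤ d₀ * c₀ c * c := by
    intro a c ha hac
    rw [hc₀ a, hc₀ c]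
    exact mlvl_gmono ε d₀ d₁ d₃ a c hε0 hd₀0' hd₁ hd₃ ha hac
  have hEαpos : 0 < d₀ * c₀ α * α := hgpos α hα
  have hα1pos : 0 < αs 1 := hαspos 1 le_rfl hM
  have hE1pos : 0 < d₀ * c₀ (αs 1) * αs 1 := hgpos _ hα1pos
  have hsqαpos : 0 < Real.sqrt α := Real.sqrt_pos.mpr hα
  have hstep2' : Δk * (d₀ + d₂ / (2 * Real.sqrt α))
      ≤ 1 / 2 * (1 - b) * (d₀ * c₀ α * α) := by
    calc Δk * (d₀ + d₂ / (2 * Real.sqrt α)) ≤ 1 / 2 * (1 - b) * d₀ * c₀ α * α := hstep2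
    _ = 1 / 2 * (1 - b) * (d₀ * c₀ α * α) := by ring
  have hstep3' : δt / (2 * Real.sqrt α) ≤ 1 / 2 * (1 - b) * (d₀ * c₀ α * α) := by
    calc δt / (2 * Real.sqrt α) ≤ 1 / 2 * (1 - b) * d₀ * c₀ α * α := hstep3
    _ = 1 / 2 * (1 - b) * (d₀ * c₀ α * α) := by ring
  have hd₀Δk : d₀ * Δk ≤ 1 / 2 * (1 - b) * (d₀ * c₀ α * α) := by
    have h1 : 0 ≤ Δk * (d₂ / (2 * Real.sqrt α)) := by positivity
    linarith [hstep2']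
  -- choice of J₀
  have hcpos : 0 < min (1/4 : ℝ)
      ((d₀ * c₀ α * α) / (12 * b * (d₀ * c₀ (αs 1) * αs 1))) := by
    apply lt_min (by norm_num)
    positivity
  obtain ⟨n₀, hn₀⟩ := exists_pow_lt_of_lt_one hcpos hq1
  refine ⟨n₀ + 1, Nat.succ_pos _, ?_⟩
  intro J hJ r rr A B hA hBinv hrr0 hupd hrJ hr0mem hr0close
  have hJ1 : 1 ≤ J := le_trans (by omega) hJ
  have hpow : q ^ (J - 1) ≤ q ^ n₀ := pow_le_pow_of_le_one hq0 hq1.le (by omega)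
  have hq14 : q ^ (J - 1) ≤ 1 / 4 :=
    le_trans hpow (le_trans hn₀.le (min_le_left _ _))
  have hqsmall : q ^ (J - 1) ≤ (d₀ * c₀ α * α) / (12 * b * (d₀ * c₀ (αs 1) * αs 1)) :=
    le_trans hpow (le_trans hn₀.le (min_le_right _ _))
  have hpowJ0 : 0 ≤ q ^ (J - 1) := pow_nonneg hq0 _
  have hqJ : q ^ J = q ^ (J - 1) * q := by
    rw [← pow_succ]
    congr 1
    omega
  have hqJ0 : 0 ≤ q ^ J := pow_nonneg hq0 _
  have hqJ14 : q ^ J ≤ 1 / 4 := by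
    rw [hqJ]
    have := mul_le_mul hq14 hq1.le hq0 (by norm_num : (0:ℝ) ≤ 1/4)
    linarith
  have hAbar0 : 0 ≤ q ^ (J - 1) * b := mul_nonneg hpowJ0 hb0.le
  have hAbar14 : q ^ (J - 1) * b ≤ 1 / 4 := by
    have := mul_le_mul hq14 hb1.le hb0.le (by norm_num : (0:ℝ) ≤ 1/4)
    linarith
  have hAbar1 : 0 < 1 - q ^ (J - 1) * b := by linarith
  have h34 : (3:ℝ)/4 ≤ 1 - q ^ (J - 1) * b := by linarith
  have hq12E : q ^ (J - 1) * b * (d₀ * c₀ (αs 1) * αs 1) ≤ (d₀ * c₀ α * α) / 12 := by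
    have hbe : (0:ℝ) < b * (d₀ * c₀ (αs 1) * αs 1) := by positivity
    have h := mul_le_mul_of_nonneg_right hqsmall hbe.le
    calc q ^ (J - 1) * b * (d₀ * c₀ (αs 1) * αs 1)
        = q ^ (J - 1) * (b * (d₀ * c₀ (αs 1) * αs 1)) := by ring
    _ ≤ (d₀ * c₀ α * α) / (12 * b * (d₀ * c₀ (αs 1) * αs 1))
          * (b * (d₀ * c₀ (αs 1) * αs 1)) := h
    _ = (d₀ * c₀ α * α) / 12 := by
        have haux : ∀ (E C : ℝ), C ≠ 0 → E / (12 * C) * C = E / 12 := by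
          intro E C hC
          field_simp
        rw [show 12 * b * (d₀ * c₀ (αs 1) * αs 1)
            = 12 * (b * (d₀ * c₀ (αs 1) * αs 1)) from by ring]
        exact haux _ _ (ne_of_gt hbe)
  -- trivial space case
  by_cases hXnt : ∃ x : X, x ≠ 0
  case neg =>
    push_neg at hXnt
    have hαM : 0 < αs M := hαspos M hM le_rfl
    have hsM : 0 < Real.sqrt (αs M) := Real.sqrt_pos.mpr hαM
    constructor
    · intro m hm1 hmM1
      have hz : rt (nseq m) - r (nseq m) = 0 := hXnt _
      rw [hz, norm_zero]
      exact (hgpos _ (hαspos (m+1) (by omega) (by omega))).le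
    · have hz : rt N - r N = 0 := hXnt _
      rw [hz, norm_zero]
      have h2a : 0 ≤ δt / (2 * Real.sqrt (αs M) * (1 - q)) :=
        div_nonneg hδt (by positivity)
      have h2b : 0 ≤ q ^ (J - 1) * Δk * (d₀ + d₂ / (2 * Real.sqrt (αs M))) := by
        apply mul_nonneg (mul_nonneg hpowJ0 hΔk.le)
        positivity
      have h3 : 0 ≤ (q ^ (J-1) * b) ^ (N - nseq (M - 1)) * (d₀ * c₀ (αs M) * αs M) :=
        mul_nonneg (pow_nonneg hAbar0 _) (hgpos _ hαM).le
      have h4 : 0 ≤ (δt / (2 * Real.sqrt (αs M) * (1 - q))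
          + q ^ (J - 1) * Δk * (d₀ + d₂ / (2 * Real.sqrt (αs M))))
            / (1 - q ^ (J - 1) * b) :=
        div_nonneg (by linarith) hAbar1.le
      linarith
  case pos =>
  obtain ⟨x₀, hx₀⟩ := hXnt
  have hx₀n : 0 < ‖x₀‖ := norm_pos_iff.mpr hx₀
  have hσd : ∀ m, 1 ≤ m → m ≤ M → σh m ≤ d₁ := by
    intro m h1 h2
    have h3 := hlow m h1 h2 (nseq m) (hnseqle (m-1) m (by omega) h2) le_rfl x₀
    have hD := (fderiv ℝ (fun r' => F (r', k (nseq m))) (rt (nseq m))).le_opNorm x₀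
    have h5 := hFr (rt (nseq m)) (k (nseq m))
    have h6 := mul_le_mul_of_nonneg_right h5 (norm_nonneg x₀)
    have h7 : σh m * ‖x₀‖ ≤ d₁ * ‖x₀‖ := le_trans h3 (le_trans hD h6)
    exact le_of_mul_le_mul_right h7 hx₀n
  -- ===== per-frequency step =====
  have freqstep : ∀ m, 1 ≤ m → m ≤ M → ∀ n, nseq (m - 1) ≤ n → n + 1 ≤ nseq m →
      r n ∈ Xs n → ‖rt n - r n‖ ≤ d₀ * c₀ (αs m) * αs m →
      (r (n + 1) ∈ Xs (n + 1) ∧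
        ‖rt (n + 1) - r (n + 1)‖ ≤
          q ^ J * (‖rt n - r n‖ + d₀ * Δk)
            + δt / (2 * Real.sqrt (αs m) * (1 - q)) ∧
        ‖rt (n + 1) - r (n + 1)‖ ≤ d₀ * c₀ (αs m) * αs m) := by
    intro m hm1 hmM n hge hlt hrmem hrclose
    have hβpos : 0 < αs m := hαspos m hm1 hmM
    have hsqβ : 0 < Real.sqrt (αs m) := Real.sqrt_pos.mpr hβpos
    have hsqβge : Real.sqrt α ≤ Real.sqrt (αs m) := Real.sqrt_le_sqrt (hαsge m hm1 hmM)
    have hn1N : n + 1 ≤ N := le_trans hlt (hnseqleN m hmM)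
    have hnN : n < N := by omega
    have hEm : 0 < d₀ * c₀ (αs m) * αs m := hgpos (αs m) hβpos
    have hEmα : d₀ * c₀ α * α ≤ d₀ * c₀ (αs m) * αs m := hgm _ _ hα (hαsge m hm1 hmM)
    have hDle : δt / (2 * Real.sqrt (αs m)) ≤ 1/2 * (1-b) * (d₀ * c₀ (αs m) * αs m) := by
      have h1 : δt / (2 * Real.sqrt (αs m)) ≤ δt / (2 * Real.sqrt α) := by
        gcongr
      have h2 := mul_le_mul_of_nonneg_left hEmα h1b
      linarith [hstep3']
    have hD0 : 0 ≤ δt / (2 * Real.sqrt (αs m)) := by positivity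
    have hσpos := hσh m hm1 hmM
    have hσd' := hσd m hm1 hmM
    have hβσ : (3 - ε) * αs m ≤ ε * σh m ^ 2 := by
      have h := hαsle m hm1 hmM
      rw [le_div_iff₀ h3ε] at h
      linarith
    have hσlow := hlow m hm1 hmM (n + 1) (by omega) hlt
    have hFz := hrtzero (n + 1) hn1N
    have hrtm := hrtmem (n + 1) hn1N
    have hPn := hP (n + 1) hn1N
    have he0 : ‖rt (n + 1) - r n‖ ≤ ‖rt n - r n‖ + d₀ * Δk := by
      have h1 : rt (n+1) - r n = (rt (n+1) - rt n) + (rt n - r n) := by abel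
      rw [h1]
      have h2 := norm_add_le (rt (n+1) - rt n) (rt n - r n)
      have h3 := hrtstep n hnN
      linarith
    have hd₀Δk' : d₀ * Δk ≤ 1/2 * (d₀ * c₀ (αs m) * αs m) := by
      have hb' : 0 ≤ b * (d₀ * c₀ α * α) := mul_nonneg hb0.le hEαpos.le
      linarith [hd₀Δk, hEmα]
    have he0E : ‖rt (n + 1) - r n‖ ≤ 3/2 * (d₀ * c₀ (αs m) * αs m) := by linarith
    have inner : ∀ j, j ≤ J →
        (rr n j ∈ Xs (n + 1) ∧
          ‖rt (n + 1) - rr n j‖ ≤ q ^ j * ‖rt (n + 1) - r n‖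
            + δt / (2 * Real.sqrt (αs m)) * ((1 - q ^ j) / (1 - q)) ∧
          ‖rt (n + 1) - rr n j‖ ≤ 3/2 * (d₀ * c₀ (αs m) * αs m)) := by
      intro j
      induction j with
      | zero =>
        intro _
        rw [hrr0 n hnN]
        refine ⟨hXsmono n hnN hrmem, ?_, he0E⟩
        simp
      | succ j ih =>
        intro hjJ
        obtain ⟨ihmem, ihII, ihIII⟩ := ih (by omega)
        have hjJ' : j < J := by omega
        obtain ⟨hB1, hB2⟩ := hBinv m hm1 hmM n hge hlt j hjJ'
        have hAdef := hA n hnN j hjJ'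
        have hup := hupd m hm1 hmM n hge hlt j hjJ'
        have ihIII' : ‖rt (n+1) - rr n j‖
            ≤ 3/2 * (d₀ * (4 * ε / (3 * d₃ * (9 * d₁ + Real.sqrt (αs m)))) * αs m) := by
          rw [← hc₀ (αs m)]
          exact ihIII
        have hcon := mlvl_contraction ε d₀ d₁ d₃ (αs m) (σh m) ‖rt (n+1) - rr n j‖
          hε0 hεd hd₀ hd₁ hd₃ hβpos hσpos hσd' hβσ (norm_nonneg _) ihIII'
        obtain ⟨hs1, hs2⟩ := hcon
        have hs0 : 0 ≤ σh m - d₃ * ‖rt (n+1) - rr n j‖ := by linarith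
        have hstepb := mlvl_step F hF d₃ hFrr (k (n+1)) (αs m) (σh m) hβpos
          (Xs (n+1)) (P (n+1)) hPn (A n j) (B n j) (rt (n+1)) (rr n j) (f (n+1))
          hAdef hB1 hB2 hrtm ihmem hFz hσlow hs0
        have hfb : ‖f (n+1)‖ ≤ δt := hf (n+1) (by omega) hn1N
        have hnext : ‖rt (n+1) - rr n (j+1)‖
            ≤ q * ‖rt (n+1) - rr n j‖ + δt / (2 * Real.sqrt (αs m)) := by
          rw [hup]
          have heq : (αs m) / ((αs m) + (σh m - d₃ * ‖rt (n+1) - rr n j‖) ^ 2)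
                * ‖rt (n+1) - rr n j‖
              + d₃ * ‖rt (n+1) - rr n j‖ ^ 2 / (2 * Real.sqrt (αs m))
              = ((αs m) / ((αs m) + (σh m - d₃ * ‖rt (n+1) - rr n j‖) ^ 2)
                  + d₃ * ‖rt (n+1) - rr n j‖ / (2 * Real.sqrt (αs m)))
                * ‖rt (n+1) - rr n j‖ := by ring
          have hs2' : (αs m) / ((αs m) + (σh m - d₃ * ‖rt (n+1) - rr n j‖) ^ 2)
              + d₃ * ‖rt (n+1) - rr n j‖ / (2 * Real.sqrt (αs m)) ≤ q := by
            rw [hqdef]; exact hs2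
          have h1 := mul_le_mul_of_nonneg_right hs2' (norm_nonneg (rt (n+1) - rr n j))
          have h2 : ‖f (n+1)‖ / (2 * Real.sqrt (αs m)) ≤ δt / (2 * Real.sqrt (αs m)) := by
            gcongr
          calc ‖rt (n+1) - (rr n j - P (n+1)
              ((B n j ∘L ContinuousLinearMap.adjoint (A n j))
                (F (rr n j, k (n+1)) + f (n+1))))‖
              ≤ (αs m) / ((αs m) + (σh m - d₃ * ‖rt (n+1) - rr n j‖) ^ 2)
                  * ‖rt (n+1) - rr n j‖
                + d₃ * ‖rt (n+1) - rr n j‖ ^ 2 / (2 * Real.sqrt (αs m))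
                + ‖f (n+1)‖ / (2 * Real.sqrt (αs m)) := hstepb
          _ ≤ q * ‖rt (n+1) - rr n j‖ + δt / (2 * Real.sqrt (αs m)) := by
              rw [show (αs m) / ((αs m) + (σh m - d₃ * ‖rt (n+1) - rr n j‖) ^ 2)
                  * ‖rt (n+1) - rr n j‖
                  + d₃ * ‖rt (n+1) - rr n j‖ ^ 2 / (2 * Real.sqrt (αs m))
                  + ‖f (n+1)‖ / (2 * Real.sqrt (αs m))
                = ((αs m) / ((αs m) + (σh m - d₃ * ‖rt (n+1) - rr n j‖) ^ 2)
                    + d₃ * ‖rt (n+1) - rr n j‖ / (2 * Real.sqrt (αs m)))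
                  * ‖rt (n+1) - rr n j‖
                  + ‖f (n+1)‖ / (2 * Real.sqrt (αs m)) from by ring]
              linarith
        refine ⟨?_, ?_, ?_⟩
        · rw [hup]
          exact Submodule.sub_mem _ ihmem (hPn _).1
        · have h3 := mul_le_mul_of_nonneg_left ihII hq0
          have hgeoid : q * (q ^ j * ‖rt (n + 1) - r n‖
                + δt / (2 * Real.sqrt (αs m)) * ((1 - q ^ j) / (1 - q)))
                + δt / (2 * Real.sqrt (αs m))
              = q ^ (j+1) * ‖rt (n + 1) - r n‖
                + δt / (2 * Real.sqrt (αs m)) * ((1 - q ^ (j+1)) / (1 - q)) := by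
            have hne : (1 - q) ≠ 0 := ne_of_gt h1q
            field_simp
            ring
          linarith
        · have hq32 : q * (3/2 * (d₀ * c₀ (αs m) * αs m))
              + 1/2 * (1-b) * (d₀ * c₀ (αs m) * αs m)
              ≤ 3/2 * (d₀ * c₀ (αs m) * αs m) := by
            have ha := mul_le_mul_of_nonneg_right hqb hEm.le
            have hbb := mul_le_mul_of_nonneg_right hb1.le hEm.le
            linarith
          have h4 := mul_le_mul_of_nonneg_left ihIII hq0
          linarith
    obtain ⟨hmemJ, hIIJ, hIIIJ⟩ := inner J le_rfl
    rw [← hrJ n hnN] at hmemJ hIIJ hIIIJ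
    have hgeo1 : (1 - q ^ J) / (1 - q) ≤ 1 / (1 - q) := by gcongr <;> linarith
    have hgeo0 : 0 ≤ (1 - q ^ J) / (1 - q) := by
      apply div_nonneg _ h1q.le
      linarith [pow_le_one₀ hq0 hq1.le (n := J)]
    refine ⟨hmemJ, ?_, ?_⟩
    · have h1 := mul_le_mul_of_nonneg_left he0 hqJ0
      have h2 : δt / (2 * Real.sqrt (αs m)) * ((1 - q ^ J) / (1 - q))
          ≤ δt / (2 * Real.sqrt (αs m)) * (1 / (1 - q)) :=
        mul_le_mul_of_nonneg_left hgeo1 hD0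
      have h3 : δt / (2 * Real.sqrt (αs m)) * (1 / (1 - q))
          = δt / (2 * Real.sqrt (αs m) * (1 - q)) := by
        rw [mul_one_div, div_div]
      linarith
    · have h1 : q ^ J * ‖rt (n + 1) - r n‖ ≤ 1/4 * (3/2 * (d₀ * c₀ (αs m) * αs m)) := by
        have ha := mul_le_mul_of_nonneg_left he0E hqJ0
        have hb' := mul_le_mul_of_nonneg_right hqJ14
          (by linarith : (0:ℝ) ≤ 3/2 * (d₀ * c₀ (αs m) * αs m))
        linarith
      have h2 : δt / (2 * Real.sqrt (αs m)) * ((1 - q ^ J) / (1 - q))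
          ≤ 1/2 * (d₀ * c₀ (αs m) * αs m) := by
        have h2a : δt / (2 * Real.sqrt (αs m)) * ((1 - q ^ J) / (1 - q))
            ≤ (1/2 * (1-b) * (d₀ * c₀ (αs m) * αs m)) * (1 / (1 - q)) := by
          apply mul_le_mul hDle hgeo1 hgeo0
            (mul_nonneg (mul_nonneg (by norm_num) h1b) hEm.le)
        have h2b : (1/2 * (1-b) * (d₀ * c₀ (αs m) * αs m)) * (1 / (1 - q))
            ≤ 1/2 * (d₀ * c₀ (αs m) * αs m) := by
          rw [mul_one_div, div_le_iff₀ h1q]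
          have := mul_le_mul_of_nonneg_right h1b1q hEm.le
          linarith
        linarith
      linarith
  -- ===== interval lemma =====
  have interval : ∀ m, 1 ≤ m → m ≤ M →
      r (nseq (m - 1)) ∈ Xs (nseq (m - 1)) →
      ‖rt (nseq (m - 1)) - r (nseq (m - 1))‖ ≤ d₀ * c₀ (αs m) * αs m →
      ∀ i, nseq (m - 1) + i ≤ nseq m →
        (r (nseq (m - 1) + i) ∈ Xs (nseq (m - 1) + i) ∧
          ‖rt (nseq (m - 1) + i) - r (nseq (m - 1) + i)‖ ≤ d₀ * c₀ (αs m) * αs m ∧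
          ‖rt (nseq (m - 1) + i) - r (nseq (m - 1) + i)‖ ≤
            (q ^ (J - 1) * b) ^ i * (d₀ * c₀ (αs m) * αs m)
              + (q ^ (J - 1) * Δk * (d₀ + d₂ / (2 * Real.sqrt (αs m)))
                 + δt / (2 * Real.sqrt (αs m) * (1 - q))) / (1 - q ^ (J - 1) * b)) := by
    intro m hm1 hmM hsm hse i
    have hβpos : 0 < αs m := hαspos m hm1 hmM
    have hsqβ : 0 < Real.sqrt (αs m) := Real.sqrt_pos.mpr hβpos
    have hC0 : 0 ≤ q ^ (J - 1) * Δk * (d₀ + d₂ / (2 * Real.sqrt (αs m)))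
        + δt / (2 * Real.sqrt (αs m) * (1 - q)) := by
      have ha : 0 ≤ q ^ (J - 1) * Δk * (d₀ + d₂ / (2 * Real.sqrt (αs m))) := by
        apply mul_nonneg (mul_nonneg hpowJ0 hΔk.le)
        positivity
      have hb' : 0 ≤ δt / (2 * Real.sqrt (αs m) * (1 - q)) :=
        div_nonneg hδt (by positivity)
      linarith
    induction i with
    | zero =>
      intro _
      simp only [Nat.add_zero, pow_zero, one_mul]
      refine ⟨hsm, hse, ?_⟩
      have := div_nonneg hC0 hAbar1.le
      linarith
    | succ i ih =>
      intro hi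
      obtain ⟨ihmem, ihEm, ihgeo⟩ := ih (by omega)
      have hstepn := freqstep m hm1 hmM (nseq (m-1) + i) (by omega) (by omega)
        ihmem ihEm
      obtain ⟨hmem1, hII1, hIII1⟩ := hstepn
      have hidx : nseq (m-1) + (i+1) = (nseq (m-1) + i) + 1 := by omega
      rw [hidx]
      refine ⟨hmem1, hIII1, ?_⟩
      set en := ‖rt (nseq (m-1) + i) - r (nseq (m-1) + i)‖ with hendef
      have hen0 : 0 ≤ en := norm_nonneg _
      have h1 : q ^ J * en ≤ q ^ (J - 1) * b * en := by
        rw [hqJ]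
        have ha := mul_le_mul_of_nonneg_right hqb hen0
        have hbb := mul_le_mul_of_nonneg_left ha hpowJ0
        linarith
      have h2 : q ^ J * (d₀ * Δk)
          ≤ q ^ (J - 1) * Δk * (d₀ + d₂ / (2 * Real.sqrt (αs m))) := by
        have h2a : q ^ J ≤ q ^ (J - 1) := by
          rw [hqJ]
          have := mul_le_mul_of_nonneg_left hq1.le hpowJ0
          linarith
        have h2b : 0 ≤ Δk * (d₂ / (2 * Real.sqrt (αs m))) := by positivity
        have h2c : d₀ * Δk ≤ Δk * (d₀ + d₂ / (2 * Real.sqrt (αs m))) := by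
          linarith [h2b]
        have h2d : 0 ≤ d₀ * Δk := by positivity
        calc q ^ J * (d₀ * Δk) ≤ q ^ (J-1) * (d₀ * Δk) :=
            mul_le_mul_of_nonneg_right h2a h2d
        _ ≤ q ^ (J-1) * (Δk * (d₀ + d₂ / (2 * Real.sqrt (αs m)))) :=
            mul_le_mul_of_nonneg_left h2c hpowJ0
        _ = q ^ (J - 1) * Δk * (d₀ + d₂ / (2 * Real.sqrt (αs m))) := by ring
      have hrec : ‖rt ((nseq (m-1) + i) + 1) - r ((nseq (m-1) + i) + 1)‖
          ≤ q ^ (J - 1) * b * en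
            + (q ^ (J - 1) * Δk * (d₀ + d₂ / (2 * Real.sqrt (αs m)))
               + δt / (2 * Real.sqrt (αs m) * (1 - q))) := by
        linarith [hII1, h1, h2]
      have h3 := mul_le_mul_of_nonneg_left ihgeo hAbar0
      have hid : q ^ (J - 1) * b * ((q ^ (J - 1) * b) ^ i * (d₀ * c₀ (αs m) * αs m)
            + (q ^ (J - 1) * Δk * (d₀ + d₂ / (2 * Real.sqrt (αs m)))
               + δt / (2 * Real.sqrt (αs m) * (1 - q))) / (1 - q ^ (J - 1) * b))
            + (q ^ (J - 1) * Δk * (d₀ + d₂ / (2 * Real.sqrt (αs m)))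
               + δt / (2 * Real.sqrt (αs m) * (1 - q)))
          = (q ^ (J - 1) * b) ^ (i+1) * (d₀ * c₀ (αs m) * αs m)
            + (q ^ (J - 1) * Δk * (d₀ + d₂ / (2 * Real.sqrt (αs m)))
               + δt / (2 * Real.sqrt (αs m) * (1 - q))) / (1 - q ^ (J - 1) * b) := by
        have hne : (1 - q ^ (J - 1) * b) ≠ 0 := ne_of_gt hAbar1
        field_simp
        ring
      linarith
  -- ===== outer induction =====
  have Qall : ∀ m, m ≤ M - 1 → (r (nseq m) ∈ Xs (nseq m) ∧
      ‖rt (nseq m) - r (nseq m)‖ ≤ d₀ * c₀ (αs (m + 1)) * αs (m + 1)) := by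
    intro m
    induction m with
    | zero =>
      intro _
      rw [hnseq0]
      exact ⟨hr0mem, hr0close⟩
    | succ m ih =>
      intro hm
      obtain ⟨ihmem, ihclose⟩ := ih (by omega)
      have hm1M : m + 1 ≤ M := by omega
      have hm2M : m + 2 ≤ M := by omega
      have hidx : (m + 1) - 1 = m := by omega
      have hL1 : 1 ≤ nseq (m+1) - nseq m := by
        have := hnseqmono m (by omega)
        omega
      have hLeq : nseq m + (nseq (m+1) - nseq m) = nseq (m+1) := by
        have := hnseqmono m (by omega)
        omega
      have hint := interval (m+1) (by omega) hm1M
        (by rw [hidx]; exact ihmem) (by rw [hidx]; exact ihclose)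
        (nseq (m+1) - nseq m) (by rw [hidx]; omega)
      rw [hidx, hLeq] at hint
      obtain ⟨hmem, hEm, hgeo⟩ := hint
      refine ⟨hmem, ?_⟩
      -- transition arithmetic
      have hα2pos : 0 < αs (m + 2) := hαspos (m+2) (by omega) hm2M
      have hE2low : d₀ * c₀ α * α ≤ d₀ * c₀ (αs (m+2)) * αs (m+2) :=
        hgm _ _ hα (hαsge (m+2) (by omega) hm2M)
      have hE1up : d₀ * c₀ (αs (m+1)) * αs (m+1) ≤ d₀ * c₀ (αs 1) * αs 1 :=
        hgm _ _ (hαspos (m+1) (by omega) hm1M) (hαsle1 (m+1) (by omega) hm1M)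
      set Abar := q ^ (J - 1) * b with hAbardef
      have hApow : Abar ^ (nseq (m+1) - nseq m) ≤ Abar := by
        have h := pow_le_pow_of_le_one hAbar0 (by linarith) hL1
        rwa [pow_one] at h
      have hterm1 : Abar ^ (nseq (m+1) - nseq m) * (d₀ * c₀ (αs (m+1)) * αs (m+1))
          ≤ (d₀ * c₀ α * α) / 12 := by
        have hE1p : 0 ≤ d₀ * c₀ (αs (m+1)) * αs (m+1) :=
          (hgpos _ (hαspos (m+1) (by omega) hm1M)).le
        calc Abar ^ (nseq (m+1) - nseq m) * (d₀ * c₀ (αs (m+1)) * αs (m+1))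
            ≤ Abar * (d₀ * c₀ (αs (m+1)) * αs (m+1)) :=
              mul_le_mul_of_nonneg_right hApow hE1p
        _ ≤ Abar * (d₀ * c₀ (αs 1) * αs 1) :=
              mul_le_mul_of_nonneg_left hE1up hAbar0
        _ ≤ (d₀ * c₀ α * α) / 12 := hq12E
      have hsqβ1 : 0 < Real.sqrt (αs (m+1)) :=
        Real.sqrt_pos.mpr (hαspos (m+1) (by omega) hm1M)
      have hsqβ1ge : Real.sqrt α ≤ Real.sqrt (αs (m+1)) :=
        Real.sqrt_le_sqrt (hαsge (m+1) (by omega) hm1M)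
      have hterma : q ^ (J - 1) * Δk * (d₀ + d₂ / (2 * Real.sqrt (αs (m+1))))
          ≤ 1/8 * (d₀ * c₀ α * α) := by
        have h1 : Δk * (d₀ + d₂ / (2 * Real.sqrt (αs (m+1))))
            ≤ Δk * (d₀ + d₂ / (2 * Real.sqrt α)) := by gcongr
        have h2 : 0 ≤ Δk * (d₀ + d₂ / (2 * Real.sqrt (αs (m+1)))) := by positivity
        calc q ^ (J - 1) * Δk * (d₀ + d₂ / (2 * Real.sqrt (αs (m+1))))
            = q ^ (J - 1) * (Δk * (d₀ + d₂ / (2 * Real.sqrt (αs (m+1))))) := by ring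
        _ ≤ 1/4 * (1/2 * (1 - b) * (d₀ * c₀ α * α)) := by
            apply mul_le_mul hq14 (le_trans h1 hstep2') h2 (by norm_num)
        _ ≤ 1/8 * (d₀ * c₀ α * α) := by
            have hb' : 0 ≤ b * (d₀ * c₀ α * α) := mul_nonneg hb0.le hEαpos.le
            linarith
      have htermb : δt / (2 * Real.sqrt (αs (m+1)) * (1 - q))
          ≤ 1/2 * (d₀ * c₀ α * α) := by
        have h1 : δt / (2 * Real.sqrt (αs (m+1))) ≤ δt / (2 * Real.sqrt α) := by
          gcongr
        have h2 : δt / (2 * Real.sqrt (αs (m+1)) * (1 - q))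
            = (δt / (2 * Real.sqrt (αs (m+1)))) * (1 / (1 - q)) := by
          rw [mul_one_div, div_div]
        rw [h2]
        have h3 : δt / (2 * Real.sqrt (αs (m+1))) ≤ 1/2 * (1 - b) * (d₀ * c₀ α * α) :=
          le_trans h1 hstep3'
        have h4 : 0 ≤ δt / (2 * Real.sqrt (αs (m+1))) := by positivity
        calc (δt / (2 * Real.sqrt (αs (m+1)))) * (1 / (1 - q))
            ≤ (1/2 * (1 - b) * (d₀ * c₀ α * α)) * (1 / (1 - q)) := by
              apply mul_le_mul_of_nonneg_right h3 (by positivity)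
        _ ≤ 1/2 * (d₀ * c₀ α * α) := by
            rw [mul_one_div, div_le_iff₀ h1q]
            have := mul_le_mul_of_nonneg_right h1b1q hEαpos.le
            linarith
      have hCle : q ^ (J - 1) * Δk * (d₀ + d₂ / (2 * Real.sqrt (αs (m+1))))
          + δt / (2 * Real.sqrt (αs (m+1)) * (1 - q)) ≤ 5/8 * (d₀ * c₀ α * α) := by
        linarith
      have hC0' : 0 ≤ q ^ (J - 1) * Δk * (d₀ + d₂ / (2 * Real.sqrt (αs (m+1))))
          + δt / (2 * Real.sqrt (αs (m+1)) * (1 - q)) := by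
        have ha : 0 ≤ q ^ (J - 1) * Δk * (d₀ + d₂ / (2 * Real.sqrt (αs (m+1)))) := by
          apply mul_nonneg (mul_nonneg hpowJ0 hΔk.le)
          positivity
        have hb' : 0 ≤ δt / (2 * Real.sqrt (αs (m+1)) * (1 - q)) :=
          div_nonneg hδt (by positivity)
        linarith
      have hterm2 : (q ^ (J - 1) * Δk * (d₀ + d₂ / (2 * Real.sqrt (αs (m+1))))
          + δt / (2 * Real.sqrt (αs (m+1)) * (1 - q))) / (1 - q ^ (J - 1) * b)
          ≤ 5/6 * (d₀ * c₀ α * α) := by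
        rw [div_le_iff₀ hAbar1]
        have := mul_le_mul_of_nonneg_left h34 hEαpos.le
        linarith [hCle]
      calc ‖rt (nseq (m+1)) - r (nseq (m+1))‖
          ≤ Abar ^ (nseq (m+1) - nseq m) * (d₀ * c₀ (αs (m+1)) * αs (m+1))
            + (q ^ (J - 1) * Δk * (d₀ + d₂ / (2 * Real.sqrt (αs (m+1))))
               + δt / (2 * Real.sqrt (αs (m+1)) * (1 - q)))
              / (1 - q ^ (J - 1) * b) := hgeo
      _ ≤ (d₀ * c₀ α * α) / 12 + 5/6 * (d₀ * c₀ α * α) := by linarith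
      _ ≤ d₀ * c₀ α * α := by linarith
      _ ≤ d₀ * c₀ (αs (m + 1 + 1)) * αs (m + 1 + 1) := hE2low
  -- ===== conclusion =====
  constructor
  · intro m hm1 hmM1
    exact (Qall m (by omega)).2
  · have hQ := Qall (M - 1) le_rfl
    rw [show M - 1 + 1 = M from by omega] at hQ
    obtain ⟨hmem, hclose⟩ := hQ
    have hnle : nseq (M - 1) ≤ N := hnseqleN (M-1) (by omega)
    have hi : nseq (M - 1) + (N - nseq (M - 1)) = N := by omega
    have hint := interval M hM le_rfl hmem hclose (N - nseq (M-1))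
      (by rw [hnseqM]; omega)
    rw [hi] at hint
    obtain ⟨_, _, hgeo⟩ := hint
    calc ‖rt N - r N‖
        ≤ (q ^ (J - 1) * b) ^ (N - nseq (M - 1)) * (d₀ * c₀ (αs M) * αs M)
          + (q ^ (J - 1) * Δk * (d₀ + d₂ / (2 * Real.sqrt (αs M)))
             + δt / (2 * Real.sqrt (αs M) * (1 - q))) / (1 - q ^ (J - 1) * b) := hgeo
    _ = (δt / (2 * Real.sqrt (αs M) * (1 - q)) +
          q ^ (J - 1) * Δk * (d₀ + d₂ / (2 * Real.sqrt (αs M)))) /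
          (1 - q ^ (J - 1) * b) +
        (q ^ (J - 1) * b) ^ (N - nseq (M - 1)) * (d₀ * c₀ (αs M) * αs M) := by
        rw [add_comm]
        congr 2
        rw [add_comm]
end
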